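/- arXiv:2209.00888 — 11 statements merged into one kernel-verified Lean document; each statement's English description precedes it below -/
import Mathlib

section
/- There exist unique smooth functions s^{m−d}, …, s^{m−1} : ℝ × ℝ^{m−d−1} → ℝ such that the map β : ℝ × ℝ^{m−d−1} → ℝ^N defined by β(t, u^1, …, u^{m−d−1}) = γ(t) + Σ_{j=1}^{m−d−1} u^j X_j(t) + Σ_{h=m−d}^{m−1} s^h(t,u) X_h(t) satisfies ⟨(∂β/∂t)(t,u), ρ_t X_h⟩ = 0 for every h ∈ {m−d, …, m−1} and every (t,u) ∈ ℝ × ℝ^{m−d−1}. (β is the striction submanifold of the ruled submanifold σ.) -/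
open scoped RealInnerProductSpace

private lemma contDiff_det_aux {k : ℕ} {M : ℝ → Matrix (Fin k) (Fin k) ℝ}
    (hM : ∀ i j, ContDiff ℝ (⊤ : ℕ∞) fun t => M t i j) :
    ContDiff ℝ (⊤ : ℕ∞) fun t => (M t).det := by
  simp only [Matrix.det_apply']
  exact ContDiff.sum fun σ _ =>
    contDiff_const.mul (contDiff_prod fun i _ => hM (σ i) i)

private lemma contDiff_adjugate_aux {k : ℕ} {M : ℝ → Matrix (Fin k) (Fin k) ℝ}
    (hM : ∀ i j, ContDiff ℝ (⊤ : ℕ∞) fun t => M t i j) (i j : Fin k) :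
    ContDiff ℝ (⊤ : ℕ∞) fun t => (M t).adjugate i j := by
  simp only [Matrix.adjugate_apply]
  apply contDiff_det_aux
  intro a b
  rcases eq_or_ne a j with rfl | hne
  · simp only [Matrix.updateRow_apply, if_pos rfl]
    exact contDiff_const
  · simp only [Matrix.updateRow_apply, if_neg hne]
    exact hM a b

/-- Under the degree-`d` assumptions, there exist unique smooth functions
`s^{m-d}, …, s^{m-1} : ℝ × ℝ^{m-d-1} → ℝ` such that the striction submanifold
`β(t,u) = γ(t) + Σⱼ uʲ Xⱼ(t) + Σ_h s^h(t,u) X_h(t)` satisfies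
`⟨∂β/∂t, ρ_t X_h⟩ = 0` for every `h ∈ {m-d, …, m-1}` and every `(t,u)`. -/
theorem stmt_3 (m n d : ℕ) (hm : 2 ≤ m) (hn : 1 ≤ n) (hd1 : 1 ≤ d) (hd2 : d ≤ m - 1)
    (γ : ℝ → EuclideanSpace ℝ (Fin (m + n)))
    (X : Fin (m - 1) → ℝ → EuclideanSpace ℝ (Fin (m + n)))
    (hγ : ContDiff ℝ (⊤ : ℕ∞) γ) (hγ' : ∀ t, ‖deriv γ t‖ = 1)
    (hX : ∀ j, ContDiff ℝ (⊤ : ℕ∞) (X j))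
    (hON : ∀ t, Orthonormal ℝ (fun j => X j t))
    (D : ℝ → Submodule ℝ (EuclideanSpace ℝ (Fin (m + n))))
    (hD : ∀ t, D t = Submodule.span ℝ (Set.range fun j => X j t))
    (ρ : ℝ → Fin (m - 1) → EuclideanSpace ℝ (Fin (m + n)))
    (hρ : ∀ t j, ρ t j = ↑(Submodule.orthogonalProjectionOnto (D t)ᗮ (deriv (X j) t)))
    -- index maps: `jdx` enumerates `{1, …, m-d-1}`, `idx` enumerates `{m-d, …, m-1}`
    (jdx : Fin (m - d - 1) → Fin (m - 1)) (hjdx : ∀ j, (jdx j : ℕ) = (j : ℕ))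
    (idx : Fin d → Fin (m - 1)) (hidx : ∀ k, (idx k : ℕ) = m - 1 - d + (k : ℕ))
    -- degree-`d` assumptions
    (hdeg : ∀ t, Module.finrank ℝ (Submodule.span ℝ (Set.range fun j => ρ t j)) = d)
    (hind : ∀ t, LinearIndependent ℝ fun k => ρ t (idx k)) :
    ∃! s : Fin d → ℝ × (Fin (m - d - 1) → ℝ) → ℝ,
      (∀ h, ContDiff ℝ (⊤ : ℕ∞) (s h)) ∧
      ∀ (h : Fin d) (t : ℝ) (u : Fin (m - d - 1) → ℝ),
        ⟪deriv (fun τ =>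
            γ τ + (∑ j, u j • X (jdx j) τ) + ∑ i, s i (τ, u) • X (idx i) τ) t,
          ρ t (idx h)⟫ = 0 := by
  classical
  have hXd : ∀ j, ContDiff ℝ (⊤ : ℕ∞) (deriv (X j)) := fun j =>
    (contDiff_infty_iff_deriv.mp (hX j)).2
  have hγd : ContDiff ℝ (⊤ : ℕ∞) (deriv γ) := (contDiff_infty_iff_deriv.mp hγ).2
  have hXdiff : ∀ j, Differentiable ℝ (X j) := fun j => (contDiff_infty_iff_deriv.mp (hX j)).1
  have hγdiff : Differentiable ℝ γ := (contDiff_infty_iff_deriv.mp hγ).1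
  -- explicit formula for the projection onto `(D t)ᗮ`
  have hρ_eq : ∀ t j, ρ t j = deriv (X j) t - ∑ k, ⟪X k t, deriv (X j) t⟫ • X k t := by
    intro t j
    rw [hρ t j]
    rw [← Submodule.starProjection_apply]
    apply Submodule.eq_starProjection_of_mem_orthogonal'
      (z := ∑ k, ⟪X k t, deriv (X j) t⟫ • X k t)
    · rw [hD, Submodule.mem_orthogonal]
      intro w hw
      induction hw using Submodule.span_induction with
      | mem x hx =>
        obtain ⟨k, rfl⟩ := hx
        have hinner : ∀ l, ⟪X k t, X l t⟫ = if k = l then (1 : ℝ) else 0 := fun l =>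
          orthonormal_iff_ite.mp (hON t) k l
        rw [inner_sub_right, inner_sum]
        simp only [real_inner_smul_right, hinner, mul_ite, mul_one, mul_zero,
          Finset.sum_ite_eq, Finset.mem_univ, if_true, sub_self]
      | zero => simp
      | add x y _ _ hx hy => rw [inner_add_left, hx, hy, add_zero]
      | smul a x _ hx => rw [real_inner_smul_left, hx, mul_zero]
    · apply (D t).le_orthogonal_orthogonal
      rw [hD]
      exact Submodule.sum_mem _ fun k _ =>
        Submodule.smul_mem _ _ (Submodule.subset_span ⟨k, rfl⟩)
    · abel
  have hρ_mem : ∀ t j, ρ t j ∈ (D t)ᗮ := fun t j => by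
    rw [hρ t j]; exact (Submodule.orthogonalProjectionOnto (D t)ᗮ (deriv (X j) t)).2
  have hXρ : ∀ t (k j : Fin (m - 1)), ⟪X k t, ρ t j⟫ = 0 := fun t k j =>
    Submodule.inner_right_of_mem_orthogonal
      (by rw [hD]; exact Submodule.subset_span ⟨k, rfl⟩) (hρ_mem t j)
  have hderivρ : ∀ t (j h : Fin (m - 1)), ⟪deriv (X j) t, ρ t h⟫ = ⟪ρ t j, ρ t h⟫ := by
    intro t j h
    have hsplit : deriv (X j) t = ρ t j + ∑ k, ⟪X k t, deriv (X j) t⟫ • X k t := by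
      rw [hρ_eq t j]; abel
    rw [hsplit, inner_add_left, sum_inner]
    simp only [real_inner_smul_left, hXρ, mul_zero, Finset.sum_const_zero, add_zero]
  have hρ_sm : ∀ j, ContDiff ℝ (⊤ : ℕ∞) fun t => ρ t j := by
    intro j
    have heq : (fun t => ρ t j)
        = fun t => deriv (X j) t - ∑ k, ⟪X k t, deriv (X j) t⟫ • X k t :=
      funext fun t => hρ_eq t j
    rw [heq]
    exact (hXd j).sub (ContDiff.sum fun k _ => ((hX k).inner ℝ (hXd j)).smul (hX k))
  -- the Gram matrix
  set G : ℝ → Matrix (Fin d) (Fin d) ℝ :=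
    fun t => Matrix.of fun h i => ⟪ρ t (idx i), ρ t (idx h)⟫ with hGdef
  have hGapp : ∀ t h i, G t h i = ⟪ρ t (idx i), ρ t (idx h)⟫ := fun t h i => rfl
  have hGsm : ∀ h i, ContDiff ℝ (⊤ : ℕ∞) fun t => G t h i := fun h i =>
    (hρ_sm (idx i)).inner ℝ (hρ_sm (idx h))
  have hGdet : ∀ t, IsUnit (G t).det := by
    intro t
    rw [← Matrix.isUnit_iff_isUnit_det, ← Matrix.mulVec_injective_iff_isUnit]
    have hker : ∀ v : Fin d → ℝ, (G t).mulVec v = 0 → v = 0 := by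
      intro v hv
      have key : ∀ h, ⟪∑ i, v i • ρ t (idx i), ρ t (idx h)⟫ = 0 := by
        intro h
        have hh := congrFun hv h
        simp only [Matrix.mulVec, dotProduct, Pi.zero_apply, hGapp] at hh
        rw [sum_inner]
        simp only [real_inner_smul_left]
        calc ∑ i, v i * ⟪ρ t (idx i), ρ t (idx h)⟫
            = ∑ i, ⟪ρ t (idx i), ρ t (idx h)⟫ * v i := by
              exact Finset.sum_congr rfl fun i _ => mul_comm _ _
          _ = 0 := hh
      have hw : ∑ i, v i • ρ t (idx i) = 0 := by
        rw [← inner_self_eq_zero (𝕜 := ℝ), inner_sum]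
        exact Finset.sum_eq_zero fun h _ => by
          rw [real_inner_smul_right, key, mul_zero]
      have := linearIndependent_iff'.mp (hind t) Finset.univ v (by simpa using hw)
      funext i
      exact this i (Finset.mem_univ i)
    intro v w hvw
    have : v - w = 0 := hker (v - w) (by rw [Matrix.mulVec_sub, hvw, sub_self])
    exact sub_eq_zero.mp this
  have hsolve : ∀ t (b : Fin d → ℝ), (G t).mulVec ((G t)⁻¹.mulVec b) = b := by
    intro t b
    rw [Matrix.mulVec_mulVec, Matrix.mul_nonsing_inv _ (hGdet t), Matrix.one_mulVec]
  -- the affine data of the linear system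
  set c : ℝ → (Fin (m - d - 1) → ℝ) → Fin d → ℝ :=
    fun t u h => ⟪deriv γ t, ρ t (idx h)⟫ + ∑ j, u j * ⟪ρ t (jdx j), ρ t (idx h)⟫ with hcdef
  -- the candidate solution
  set s₀ : Fin d → ℝ × (Fin (m - d - 1) → ℝ) → ℝ :=
    fun h p => (G p.1)⁻¹.mulVec (fun i => -(c p.1 p.2 i)) h with hs₀def
  have hs₀_sm : ∀ h, ContDiff ℝ (⊤ : ℕ∞) (s₀ h) := by
    intro h
    have hrepr : s₀ h = fun p : ℝ × (Fin (m - d - 1) → ℝ) =>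
        ((G p.1).det)⁻¹ * ∑ i, (G p.1).adjugate h i * (-(c p.1 p.2 i)) := by
      funext p
      simp only [hs₀def, Matrix.mulVec, dotProduct, Matrix.inv_def,
        Ring.inverse_eq_inv', Matrix.smul_apply, smul_eq_mul]
      rw [Finset.mul_sum]
      exact Finset.sum_congr rfl fun i _ => by ring
    rw [hrepr]
    have hcsm : ∀ i, ContDiff ℝ (⊤ : ℕ∞)
        fun p : ℝ × (Fin (m - d - 1) → ℝ) => c p.1 p.2 i := by
      intro i
      apply ContDiff.add
      · exact (hγd.inner ℝ (hρ_sm (idx i))).comp contDiff_fst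
      · exact ContDiff.sum fun j _ =>
          (((ContinuousLinearMap.proj (R := ℝ) (φ := fun _ : Fin (m - d - 1) => ℝ)
            j).contDiff).comp contDiff_snd).mul
            (((hρ_sm (jdx j)).inner ℝ (hρ_sm (idx i))).comp contDiff_fst)
    refine ContDiff.mul (ContDiff.inv ((contDiff_det_aux hGsm).comp contDiff_fst)
      fun p => (hGdet p.1).ne_zero) ?_
    exact ContDiff.sum fun i _ =>
      ((contDiff_adjugate_aux hGsm h i).comp contDiff_fst).mul (hcsm i).neg
  -- the key computation of the derivative inner product
  have key : ∀ (s : Fin d → ℝ × (Fin (m - d - 1) → ℝ) → ℝ),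
      (∀ i, ContDiff ℝ (⊤ : ℕ∞) (s i)) →
      ∀ (h : Fin d) (t : ℝ) (u : Fin (m - d - 1) → ℝ),
      ⟪deriv (fun τ =>
          γ τ + (∑ j, u j • X (jdx j) τ) + ∑ i, s i (τ, u) • X (idx i) τ) t,
        ρ t (idx h)⟫ = c t u h + ∑ i, s i (t, u) * G t h i := by
    intro s hs h t u
    have hsdiff : ∀ i, DifferentiableAt ℝ (fun τ => s i (τ, u)) t := fun i =>
      (((hs i).comp (contDiff_id.prodMk contDiff_const)).differentiable (by simp)).differentiableAt
    have hder : HasDerivAt (fun τ =>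
        γ τ + (∑ j, u j • X (jdx j) τ) + ∑ i, s i (τ, u) • X (idx i) τ)
        (deriv γ t + (∑ j, u j • deriv (X (jdx j)) t) +
          ∑ i, (s i (t, u) • deriv (X (idx i)) t +
            deriv (fun τ => s i (τ, u)) t • X (idx i) t)) t := by
      refine HasDerivAt.add (HasDerivAt.add ?_ ?_) ?_
      · exact (hγdiff t).hasDerivAt
      · exact HasDerivAt.fun_sum fun j _ => ((hXdiff (jdx j) t).hasDerivAt).const_smul (u j)
      · exact HasDerivAt.fun_sum fun i _ =>
          (hsdiff i).hasDerivAt.smul ((hXdiff (idx i) t).hasDerivAt)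
    rw [hder.deriv, inner_add_left, inner_add_left, sum_inner, sum_inner]
    have e2 : ∀ j, ⟪u j • deriv (X (jdx j)) t, ρ t (idx h)⟫
        = u j * ⟪ρ t (jdx j), ρ t (idx h)⟫ := fun j => by
      rw [real_inner_smul_left, hderivρ]
    have e3 : ∀ i, ⟪s i (t, u) • deriv (X (idx i)) t +
        deriv (fun τ => s i (τ, u)) t • X (idx i) t, ρ t (idx h)⟫
        = s i (t, u) * G t h i := fun i => by
      rw [inner_add_left, real_inner_smul_left, real_inner_smul_left, hderivρ,
        hXρ, mul_zero, add_zero, hGapp]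
    rw [Finset.sum_congr rfl fun j _ => e2 j, Finset.sum_congr rfl fun i _ => e3 i]
  -- the linear system satisfied by `s₀`
  have hmain : ∀ (h : Fin d) t u, c t u h + ∑ i, s₀ i (t, u) * G t h i = 0 := by
    intro h t u
    have h1 : (G t).mulVec (fun i => s₀ i (t, u)) = fun i => -(c t u i) := hsolve t _
    have h2 := congrFun h1 h
    simp only [Matrix.mulVec, dotProduct] at h2
    calc c t u h + ∑ i, s₀ i (t, u) * G t h i
        = c t u h + ∑ i, G t h i * s₀ i (t, u) := by
          rw [Finset.sum_congr rfl fun i _ => mul_comm (s₀ i (t, u)) (G t h i)]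
      _ = c t u h + -(c t u h) := by rw [h2]
      _ = 0 := add_neg_cancel _
  refine ⟨s₀, ⟨hs₀_sm, fun h t u => ?_⟩, ?_⟩
  · rw [key s₀ hs₀_sm h t u]
    exact hmain h t u
  · rintro s' ⟨hs'sm, hs'⟩
    funext i p
    obtain ⟨t, u⟩ := p
    have hGinj : Function.Injective (G t).mulVec :=
      Matrix.mulVec_injective_iff_isUnit.mpr ((Matrix.isUnit_iff_isUnit_det _).mpr (hGdet t))
    have hA : ∀ h, c t u h + ∑ i, s' i (t, u) * G t h i = 0 := fun h => by
      rw [← key s' hs'sm h t u]; exact hs' h t u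
    have heq : (G t).mulVec (fun i => s' i (t, u)) = (G t).mulVec (fun i => s₀ i (t, u)) := by
      funext h
      simp only [Matrix.mulVec, dotProduct]
      have hA' := hA h
      have hB' := hmain h t u
      have : ∑ i, s' i (t, u) * G t h i = ∑ i, s₀ i (t, u) * G t h i := by linarith
      calc ∑ i, G t h i * s' i (t, u)
          = ∑ i, s' i (t, u) * G t h i := Finset.sum_congr rfl fun i _ => mul_comm _ _
        _ = ∑ i, s₀ i (t, u) * G t h i := this
        _ = ∑ i, G t h i * s₀ i (t, u) := Finset.sum_congr rfl fun i _ => mul_comm _ _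
    exact congrFun (hGinj heq) i
end

section
/- Let V be a finite-dimensional real inner product space, let x_1, …, x_{m−1} ∈ V be an orthonormal family, and let π^⊥ denote the orthogonal projection of V onto span(x_1, …, x_{m−1})^⊥. Let y_{m−d}, …, y_{m−1} ∈ V be vectors such that π^⊥(y_{m−d}), …, π^⊥(y_{m−1}) are linearly independent, and let w ∈ V satisfy ⟨w, π^⊥(y_h)⟩ = 0 for every h ∈ {m−d, …, m−1}. Then for any real numbers c_{m−d}, …, c_{m−1}, the family (w + Σ_{h=m−d}^{m−1} c_h y_h, x_1, …, x_{m−1}) is linearly dependent if and only if c_h = 0 for all h and the family (w, x_1, …, x_{m−1}) is linearly dependent. -/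
open scoped RealInnerProductSpace

/-- Let `V` be a finite-dimensional real inner product space,
`x₁, …, x_{m-1}` an orthonormal family, `π⊥` the orthogonal projection onto
`span(x₁, …, x_{m-1})ᗮ`, and `y_{m-d}, …, y_{m-1}` vectors with
`π⊥(y_{m-d}), …, π⊥(y_{m-1})` linearly independent. If `w` satisfies `⟨w, π⊥(y_h)⟩ = 0` for all
`h`, then for any scalars `c_{m-d}, …, c_{m-1}` the family `(w + Σ_h c_h y_h, x₁, …, x_{m-1})`
is linearly dependent iff all `c_h = 0` and `(w, x₁, …, x_{m-1})` is linearly dependent. -/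
theorem stmt_4 (m d : ℕ) (hm : 2 ≤ m) (hd1 : 1 ≤ d) (hd2 : d ≤ m - 1)
    (V : Type*) [NormedAddCommGroup V] [InnerProductSpace ℝ V] [FiniteDimensional ℝ V]
    (x : Fin (m - 1) → V) (hx : Orthonormal ℝ x)
    (P : V → V)
    (hP : ∀ v, P v = ↑(Submodule.orthogonalProjectionOnto (Submodule.span ℝ (Set.range x))ᗮ v))
    (y : Fin d → V) (hy : LinearIndependent ℝ fun h => P (y h))
    (w : V) (hw : ∀ h, ⟪w, P (y h)⟫ = 0)
    (c : Fin d → ℝ) :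
    ¬ LinearIndependent ℝ (Matrix.vecCons (w + ∑ h, c h • y h) x) ↔
      (∀ h, c h = 0) ∧ ¬ LinearIndependent ℝ (Matrix.vecCons w x) := by
  classical
  set K := Submodule.span ℝ (Set.range x) with hK
  have hxK : LinearIndependent ℝ x := hx.linearIndependent
  have key : ∀ v : V, ¬ LinearIndependent ℝ (Matrix.vecCons v x) ↔ v ∈ K := by
    intro v
    rw [show Matrix.vecCons v x = Fin.cons v x from rfl, linearIndependent_fin_cons]
    simp [hxK, hK]
  have hmem : ∀ v : V, v ∈ K ↔ P v = 0 := by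
    intro v
    rw [hP, ZeroMemClass.coe_eq_zero, Submodule.orthogonalProjectionOnto_eq_zero_iff,
      Submodule.orthogonal_orthogonal]
  have hPK : ∀ v : V, P v ∈ Kᗮ := fun v => by rw [hP]; exact (Submodule.orthogonalProjectionOnto Kᗮ v).2
  have hPw : ∀ v u : V, ⟪v, P u⟫ = ⟪P v, P u⟫ := by
    intro v u
    have h1 : v - P v ∈ K := by
      rw [hP]
      have h2 := Submodule.sub_starProjection_mem_orthogonal (K := Kᗮ) v
      rwa [Submodule.orthogonal_orthogonal] at h2
    have := (Submodule.mem_orthogonal K (P u)).mp (hPK u) (v - P v) h1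
    rw [inner_sub_left] at this
    linarith [this]
  have hPsum : P (w + ∑ h, c h • y h) = P w + ∑ h, c h • P (y h) := by
    have : P = fun v => ((Kᗮ.subtype.comp (Submodule.orthogonalProjectionOnto Kᗮ).toLinearMap) : V →ₗ[ℝ] V) v := by
      funext v; rw [hP]; rfl
    rw [this]
    simp [map_add, map_sum, map_smul]
  rw [key, key, hmem, hmem, hPsum]
  constructor
  · intro h0
    have hPw0 : P w = 0 := by
      have h1 : ⟪P w, P w⟫ = 0 := by
        have := congrArg (fun z => ⟪P w, z⟫) h0
        simp only [inner_add_right, inner_sum, inner_smul_right, inner_zero_right] at this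
        have hz : ∀ h : Fin d, ⟪P w, P (y h)⟫ = 0 := fun h => by rw [← hPw]; exact hw h
        simpa [hz] using this
      exact inner_self_eq_zero.mp h1
    have hsum : ∑ h, c h • P (y h) = 0 := by
      rw [hPw0, zero_add] at h0; exact h0
    have hc : ∀ h, c h = 0 := by
      have := Fintype.linearIndependent_iff.mp hy c hsum
      exact this
    exact ⟨hc, hPw0⟩
  · rintro ⟨hc, hw0⟩
    simp [hc, hw0]
end

section
/- Define σ̃ : ℝ × ℝ^{m−1} → ℝ^N by σ̃(t, u^1, …, u^{m−1}) = β(t, u^1, …, u^{m−d−1}) + Σ_{h=m−d}^{m−1} u^h X_h(t). Then the differential of σ̃ at (t, u^1, …, u^{m−1}) fails to be injective if and only if u^{m−d} = … = u^{m−1} = 0 and the vectors (∂β/∂t)(t, u^1, …, u^{m−d−1}), X_1(t), …, X_{m−1}(t) are linearly dependent. In particular, the only singular points of the ruled submanifold, if any, lie along its striction submanifold β. -/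
open scoped RealInnerProductSpace

set_option maxHeartbeats 2000000

/-- With `σ̃(t,u) = β(t, u¹, …, u^{m-d-1}) + Σ_h u^h X_h(t)`, the differential
of `σ̃` at `(t,u)` fails to be injective iff `u^{m-d} = ⋯ = u^{m-1} = 0` and the vectors
`∂β/∂t, X₁(t), …, X_{m-1}(t)` are linearly dependent.  In particular, the only singular points
of the ruled submanifold lie along its striction submanifold `β`. -/
theorem stmt_5 (m n d : ℕ) (hm : 2 ≤ m) (hn : 1 ≤ n) (hd1 : 1 ≤ d) (hd2 : d ≤ m - 1)
    (γ : ℝ → EuclideanSpace ℝ (Fin (m + n)))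
    (X : Fin (m - 1) → ℝ → EuclideanSpace ℝ (Fin (m + n)))
    (hγ : ContDiff ℝ (⊤ : ℕ∞) γ) (hγ' : ∀ t, ‖deriv γ t‖ = 1)
    (hX : ∀ j, ContDiff ℝ (⊤ : ℕ∞) (X j))
    (hON : ∀ t, Orthonormal ℝ (fun j => X j t))
    (D : ℝ → Submodule ℝ (EuclideanSpace ℝ (Fin (m + n))))
    (hD : ∀ t, D t = Submodule.span ℝ (Set.range fun j => X j t))
    (ρ : ℝ → Fin (m - 1) → EuclideanSpace ℝ (Fin (m + n)))
    (hρ : ∀ t j, ρ t j = ↑(Submodule.orthogonalProjectionOnto (D t)ᗮ (deriv (X j) t)))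
    -- index maps: `jdx` enumerates `{1, …, m-d-1}`, `idx` enumerates `{m-d, …, m-1}`
    (jdx : Fin (m - d - 1) → Fin (m - 1)) (hjdx : ∀ j, (jdx j : ℕ) = (j : ℕ))
    (idx : Fin d → Fin (m - 1)) (hidx : ∀ k, (idx k : ℕ) = m - 1 - d + (k : ℕ))
    -- degree-`d` assumptions
    (hdeg : ∀ t, Module.finrank ℝ (Submodule.span ℝ (Set.range fun j => ρ t j)) = d)
    (hind : ∀ t, LinearIndependent ℝ fun k => ρ t (idx k))
    -- the striction submanifold `β`, built from smooth functions `s^{m-d}, …, s^{m-1}`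
    (s : Fin d → ℝ × (Fin (m - d - 1) → ℝ) → ℝ) (hs : ∀ h, ContDiff ℝ (⊤ : ℕ∞) (s h))
    (β : ℝ → (Fin (m - d - 1) → ℝ) → EuclideanSpace ℝ (Fin (m + n)))
    (hβ : ∀ t u, β t u =
      γ t + (∑ j, u j • X (jdx j) t) + ∑ h, s h (t, u) • X (idx h) t)
    (hstr : ∀ (h : Fin d) (t : ℝ) (u : Fin (m - d - 1) → ℝ),
      ⟪deriv (fun τ => β τ u) t, ρ t (idx h)⟫ = 0)
    -- the reparametrization `σ̃` of the ruled submanifold in terms of `β`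
    (σt : ℝ × (Fin (m - 1) → ℝ) → EuclideanSpace ℝ (Fin (m + n)))
    (hσt : ∀ (t : ℝ) (u : Fin (m - 1) → ℝ),
      σt (t, u) = β t (fun j => u (jdx j)) + ∑ h, u (idx h) • X (idx h) t)
    (t : ℝ) (u : Fin (m - 1) → ℝ) :
    ¬ Function.Injective (fderiv ℝ σt (t, u)) ↔
      (∀ h : Fin d, u (idx h) = 0) ∧
      ¬ LinearIndependent ℝ
        (Matrix.vecCons (deriv (fun τ => β τ (fun j => u (jdx j))) t) (fun j => X j t)) := by
  classical
  set u' : Fin (m - d - 1) → ℝ := fun j => u (jdx j) with hu'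
  set A : EuclideanSpace ℝ (Fin (m + n)) := deriv (fun τ => β τ u') t with hA
  set Bt : EuclideanSpace ℝ (Fin (m + n)) :=
    A + ∑ h, u (idx h) • deriv (X (idx h)) t with hBt
  -- the index bijection
  have hbij : Function.Bijective (Sum.elim jdx idx) := by
    have hinj : Function.Injective (Sum.elim jdx idx) := by
      rintro (a | a) (b | b) h <;> simp only [Sum.elim_inl, Sum.elim_inr] at h <;>
        have h' := congrArg Fin.val h
      · rw [hjdx, hjdx] at h'; exact congrArg Sum.inl (Fin.ext h')
      · rw [hjdx, hidx] at h'; exact absurd h' (by omega)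
      · rw [hidx, hjdx] at h'; exact absurd h' (by omega)
      · rw [hidx, hidx] at h'; exact congrArg Sum.inr (Fin.ext (by omega))
    exact (Fintype.bijective_iff_injective_and_card _).mpr ⟨hinj, by simp; omega⟩
  set e : Fin (m - d - 1) ⊕ Fin d ≃ Fin (m - 1) := Equiv.ofBijective _ hbij with he
  have hje : ∀ j, e (Sum.inl j) = jdx j := fun j => by rw [he]; rfl
  have hke : ∀ k, e (Sum.inr k) = idx k := fun k => by rw [he]; rfl
  have hej : ∀ j, e.symm (jdx j) = Sum.inl j := fun j => by
    rw [← hje j, Equiv.symm_apply_apply]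
  have hek : ∀ k, e.symm (idx k) = Sum.inr k := fun k => by
    rw [← hke k, Equiv.symm_apply_apply]
  -- basic membership facts
  have hXmem : ∀ i, X i t ∈ D t := fun i => by
    rw [hD t]; exact Submodule.subset_span ⟨i, rfl⟩
  have hXtind : LinearIndependent ℝ (fun j => X j t) := (hON t).linearIndependent
  have hρmem : ∀ k : Fin d, ρ t (idx k) ∈ (D t)ᗮ := fun k => by
    rw [hρ t (idx k)]; exact SetLike.coe_mem _
  -- the reparametrized map in explicit form
  have hσfun : σt = fun p : ℝ × (Fin (m - 1) → ℝ) =>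
      γ p.1 + (∑ j, p.2 (jdx j) • X (jdx j) p.1)
        + (∑ h, s h (p.1, fun j => p.2 (jdx j)) • X (idx h) p.1)
        + (∑ h, p.2 (idx h) • X (idx h) p.1) := by
    funext p
    obtain ⟨a, b⟩ := p
    rw [hσt, hβ]
  -- explicit derivative of the striction curve
  have hβfun : (fun τ => β τ u') = fun τ =>
      γ τ + (∑ j, u' j • X (jdx j) τ) + ∑ h, s h (τ, u') • X (idx h) τ :=
    funext fun τ => hβ τ u'
  have hγd : HasDerivAt γ (deriv γ t) t :=
    ((hγ.differentiable (by simp)) t).hasDerivAt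
  have hXd : ∀ i, HasDerivAt (X i) (deriv (X i) t) t := fun i =>
    (((hX i).differentiable (by simp)) t).hasDerivAt
  have hsd : ∀ h : Fin d, HasDerivAt (fun τ => s h (τ, u'))
      (fderiv ℝ (s h) (t, u') (1, 0)) t := by
    intro h
    have h1 : HasFDerivAt (s h) (fderiv ℝ (s h) (t, u')) ((fun τ : ℝ => (τ, u')) t) :=
      (((hs h).differentiable (by simp)) _).hasFDerivAt
    have h2 : HasDerivAt (fun τ : ℝ => ((τ, u') : ℝ × (Fin (m - d - 1) → ℝ))) (1, 0) t :=
      (hasDerivAt_id t).prodMk (hasDerivAt_const t u')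
    exact h1.comp_hasDerivAt t h2
  have hAval : A = deriv γ t + (∑ j, u' j • deriv (X (jdx j)) t)
      + ∑ h, ((fderiv ℝ (s h) (t, u') (1, 0)) • X (idx h) t
          + s h (t, u') • deriv (X (idx h)) t) := by
    rw [hA, hβfun]
    have hd := ((hγd.add (HasDerivAt.fun_sum (fun j (_ : j ∈ Finset.univ) =>
        (hXd (jdx j)).const_smul (u' j)))).add
      (HasDerivAt.fun_sum (fun h (_ : h ∈ Finset.univ) => (hsd h).smul (hXd (idx h)))))
    refine hd.deriv.trans ?_
    congr 1
    refine Finset.sum_congr rfl fun h _ => ?_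
    module
  -- the total derivative of σ̃ and its evaluation
  set Ψ : (Fin (m - 1) → ℝ) →L[ℝ] (Fin (m - d - 1) → ℝ) :=
    ContinuousLinearMap.pi (fun j => ContinuousLinearMap.proj (jdx j)) with hΨ
  set Φ : (ℝ × (Fin (m - 1) → ℝ)) →L[ℝ] (ℝ × (Fin (m - d - 1) → ℝ)) :=
    (ContinuousLinearMap.fst ℝ ℝ _).prod (Ψ.comp (ContinuousLinearMap.snd ℝ ℝ _)) with hΦ
  have hΦap : ∀ p : ℝ × (Fin (m - 1) → ℝ), Φ p = (p.1, fun j => p.2 (jdx j)) := fun p => rfl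
  have hγd' : HasFDerivAt (fun p : ℝ × (Fin (m - 1) → ℝ) => γ p.1)
      ((fderiv ℝ γ t).comp (ContinuousLinearMap.fst ℝ ℝ _)) (t, u) :=
    ((hγ.differentiable (by simp)) t).hasFDerivAt.comp (t, u) hasFDerivAt_fst
  have hXd' : ∀ i, HasFDerivAt (fun p : ℝ × (Fin (m - 1) → ℝ) => X i p.1)
      ((fderiv ℝ (X i) t).comp (ContinuousLinearMap.fst ℝ ℝ _)) (t, u) := fun i =>
    (((hX i).differentiable (by simp)) t).hasFDerivAt.comp (t, u) hasFDerivAt_fst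
  have hsd' : ∀ h, HasFDerivAt (fun p : ℝ × (Fin (m - 1) → ℝ) => s h (p.1, fun j => p.2 (jdx j)))
      ((fderiv ℝ (s h) (t, u')).comp Φ) (t, u) := by
    intro h
    have h1 : HasFDerivAt (s h) (fderiv ℝ (s h) (t, u')) (Φ (t, u)) :=
      (((hs h).differentiable (by simp)) _).hasFDerivAt
    exact h1.comp (t, u) Φ.hasFDerivAt
  have h2 := HasFDerivAt.fun_sum (u := Finset.univ) (fun (j : Fin (m - d - 1)) _ =>
    (((ContinuousLinearMap.proj (R := ℝ) (φ := fun _ : Fin (m - 1) => ℝ) (jdx j)).comp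
      (ContinuousLinearMap.snd ℝ ℝ _)).hasFDerivAt).fun_smul (hXd' (jdx j)))
  have h3 := HasFDerivAt.fun_sum (u := Finset.univ) (fun (h : Fin d) _ =>
    (hsd' h).fun_smul (hXd' (idx h)))
  have h4 := HasFDerivAt.fun_sum (u := Finset.univ) (fun (h : Fin d) _ =>
    (((ContinuousLinearMap.proj (R := ℝ) (φ := fun _ : Fin (m - 1) => ℝ) (idx h)).comp
      (ContinuousLinearMap.snd ℝ ℝ _)).hasFDerivAt).fun_smul (hXd' (idx h)))
  have hfd := ((hγd'.fun_add h2).fun_add h3).fun_add h4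
  have hLval : ∀ (τ : ℝ) (v : Fin (m - 1) → ℝ), fderiv ℝ σt (t, u) (τ, v) =
      τ • Bt + (∑ j, v (jdx j) • X (jdx j) t)
        + ∑ h, ((fderiv ℝ (s h) (t, u')) (0, fun j => v (jdx j)) + v (idx h))
            • X (idx h) t := by
    intro τ v
    have hL := hfd.fderiv
    beta_reduce at hL
    simp only [ContinuousLinearMap.coe_comp', Function.comp_apply,
      ContinuousLinearMap.coe_snd', ContinuousLinearMap.proj_apply] at hL
    rw [hσfun, hL, hBt, hAval]
    have hder : ∀ (g : ℝ → EuclideanSpace ℝ (Fin (m + n))), ContDiff ℝ (⊤ : ℕ∞) g →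
        (fderiv ℝ g t) τ = τ • deriv g t := by
      intro g hg
      rw [← fderiv_apply_one_eq_deriv, ← (fderiv ℝ g t).map_smul, smul_eq_mul, mul_one]
    have hXder : ∀ i : Fin (m - 1), (fderiv ℝ (X i) t) τ = τ • deriv (X i) t := fun i =>
      hder (X i) (hX i)
    have hsplit : ∀ h : Fin d, (fderiv ℝ (s h) (t, u')) (τ, fun j => v (jdx j))
        = τ * (fderiv ℝ (s h) (t, u')) (1, 0)
          + (fderiv ℝ (s h) (t, u')) (0, fun j => v (jdx j)) := by
      intro h
      have heq : ((τ, fun j => v (jdx j)) : ℝ × (Fin (m - d - 1) → ℝ))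
          = τ • ((1, 0) : ℝ × (Fin (m - d - 1) → ℝ)) + (0, fun j => v (jdx j)) := by
        simp [Prod.ext_iff]
      rw [heq, map_add, map_smul, smul_eq_mul]
    simp only [ContinuousLinearMap.add_apply, ContinuousLinearMap.coe_sum', Finset.sum_apply,
      ContinuousLinearMap.coe_comp', Function.comp_apply, ContinuousLinearMap.coe_fst',
      ContinuousLinearMap.coe_snd', ContinuousLinearMap.smul_apply,
      ContinuousLinearMap.smulRight_apply, ContinuousLinearMap.proj_apply, hΦap]
    rw [hder γ hγ]
    simp only [hXder, hsplit, ← hu']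
    simp only [smul_add, add_smul, mul_smul, Finset.smul_sum, Finset.sum_add_distrib,
      smul_comm τ]
    abel
  -- the core projection argument
  have hcore : Bt ∈ D t → (∀ k, u (idx k) = 0) ∧ A ∈ D t := by
    intro hBmem
    set π := Submodule.orthogonalProjectionOnto (D t)ᗮ with hπ
    have hπB : ((π Bt : (D t)ᗮ) : EuclideanSpace ℝ (Fin (m + n))) = 0 := by
      rw [hπ, Submodule.orthogonalProjectionOnto_orthogonal_apply_eq_zero hBmem]
      simp
    have hexp : ((π Bt : (D t)ᗮ) : EuclideanSpace ℝ (Fin (m + n)))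
        = ((π A : (D t)ᗮ) : EuclideanSpace ℝ (Fin (m + n)))
          + ∑ k, u (idx k) • ρ t (idx k) := by
      have h1 : π Bt = π A + ∑ k, u (idx k) • π (deriv (X (idx k)) t) := by
        rw [hBt, map_add, map_sum]
        congr 1
        exact Finset.sum_congr rfl fun k _ => map_smul _ _ _
      rw [h1]
      push_cast
      simp [hρ t, hπ]
    have horthA : ∀ k, ⟪A, ρ t (idx k)⟫ = 0 := fun k => hstr k t u'
    have hπorthA : ∀ k,
        ⟪((π A : (D t)ᗮ) : EuclideanSpace ℝ (Fin (m + n))), ρ t (idx k)⟫ = 0 := by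
      intro k
      have hsub := Submodule.sub_starProjection_mem_orthogonal (K := (D t)ᗮ) A
      rw [Submodule.starProjection_apply] at hsub
      rw [← hπ] at hsub
      have h1 : ⟪ρ t (idx k), A - ((π A : (D t)ᗮ) : EuclideanSpace ℝ (Fin (m + n)))⟫ = 0 :=
        Submodule.inner_right_of_mem_orthogonal (hρmem k) hsub
      rw [real_inner_comm, inner_sub_left, horthA k] at h1
      linarith
    have hπA : ((π A : (D t)ᗮ) : EuclideanSpace ℝ (Fin (m + n))) = 0 := by
      have h0 : ⟪((π Bt : (D t)ᗮ) : EuclideanSpace ℝ (Fin (m + n))),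
          ((π A : (D t)ᗮ) : EuclideanSpace ℝ (Fin (m + n)))⟫ = 0 := by
        rw [hπB]; simp
      rw [hexp, inner_add_left, sum_inner] at h0
      have h1 : ∀ k ∈ Finset.univ, ⟪u (idx k) • ρ t (idx k),
          ((π A : (D t)ᗮ) : EuclideanSpace ℝ (Fin (m + n)))⟫ = 0 := by
        intro k _
        rw [real_inner_smul_left, real_inner_comm, hπorthA k, mul_zero]
      rw [Finset.sum_eq_zero h1, add_zero] at h0
      exact inner_self_eq_zero.mp h0
    have hsum0 : ∑ k, u (idx k) • ρ t (idx k) = 0 := by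
      have h5 := hexp.symm.trans hπB
      rwa [hπA, zero_add] at h5
    have hu0 : ∀ k, u (idx k) = 0 :=
      Fintype.linearIndependent_iff.mp (hind t) _ hsum0
    have hAmem : A ∈ D t := by
      have hsub := Submodule.sub_starProjection_mem_orthogonal (K := (D t)ᗮ) A
      rw [Submodule.starProjection_apply] at hsub
      rw [← hπ, hπA, sub_zero, Submodule.orthogonal_orthogonal] at hsub
      exact hsub
    exact ⟨hu0, hAmem⟩
  -- dependence of the cons family is membership of A in D t
  have hdep_iff : ¬ LinearIndependent ℝ (Matrix.vecCons A fun j => X j t) ↔ A ∈ D t := by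
    rw [hD t]
    constructor
    · intro hn
      by_contra hA'
      exact hn (linearIndependent_fin_cons.mpr ⟨hXtind, hA'⟩)
    · intro hA' hli
      exact (linearIndependent_fin_cons.mp hli).2 hA'
  constructor
  · -- forward direction
    intro hninj
    obtain ⟨⟨τ, v⟩, hx0, hxne⟩ : ∃ x, fderiv ℝ σt (t, u) x = 0 ∧ x ≠ 0 := by
      by_contra hc
      push_neg at hc
      exact hninj fun a b hab => sub_eq_zero.mp
        (hc (a - b) (by rw [map_sub, hab, sub_self]))
    rw [hLval τ v] at hx0
    by_cases hτ : τ = 0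
    · exfalso
      subst hτ
      rw [zero_smul, zero_add] at hx0
      set w : Fin (m - 1) → ℝ := fun i =>
        Sum.elim (fun j => v (jdx j))
          (fun k => (fderiv ℝ (s k) (t, u')) (0, fun j => v (jdx j)) + v (idx k))
          (e.symm i) with hw
      have hwj : ∀ j, w (jdx j) = v (jdx j) := fun j => by
        rw [hw]; simp only [hej j, Sum.elim_inl]
      have hwk : ∀ k, w (idx k) =
          (fderiv ℝ (s k) (t, u')) (0, fun j => v (jdx j)) + v (idx k) := fun k => by
        rw [hw]; simp only [hek k, Sum.elim_inr]
      have hsum : ∑ i, w i • X i t = 0 := by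
        rw [← Equiv.sum_comp e (fun i => w i • X i t), Fintype.sum_sum_type]
        simp only [hje, hke, hwj, hwk]
        exact hx0
      have hw0 : ∀ i, w i = 0 := Fintype.linearIndependent_iff.mp hXtind _ hsum
      have hvj0 : ∀ j, v (jdx j) = 0 := fun j => by rw [← hwj j]; exact hw0 _
      have hv0 : v = 0 := by
        funext i
        obtain ⟨x, hx⟩ := hbij.2 i
        cases x with
        | inl j => rw [← hx]; exact hvj0 j
        | inr k =>
          have h1 := hw0 (idx k)
          rw [hwk k] at h1
          have h5 : (fun j => v (jdx j)) = (0 : Fin (m - d - 1) → ℝ) :=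
            funext fun j => hvj0 j
          rw [h5] at h1
          simp only [Prod.mk_zero_zero, map_zero, zero_add] at h1
          rw [← hx]
          exact h1
      exact hxne (by rw [hv0]; rfl)
    · -- τ ≠ 0 : Bt lies in D t
      have hRmem : (∑ j, v (jdx j) • X (jdx j) t)
          + ∑ h, ((fderiv ℝ (s h) (t, u')) (0, fun j => v (jdx j)) + v (idx h))
              • X (idx h) t ∈ D t := by
        refine Submodule.add_mem _ ?_ ?_ <;>
          exact Submodule.sum_mem _ fun i _ => Submodule.smul_mem _ _ (hXmem _)
      have hBmem : Bt ∈ D t := by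
        have h1 : τ • Bt = -((∑ j, v (jdx j) • X (jdx j) t)
            + ∑ h, ((fderiv ℝ (s h) (t, u')) (0, fun j => v (jdx j)) + v (idx h))
                • X (idx h) t) := by
          rw [← add_eq_zero_iff_eq_neg, ← add_assoc]
          exact hx0
        have h5 : Bt = τ⁻¹ • (τ • Bt) := by
          rw [smul_smul, inv_mul_cancel₀ hτ, one_smul]
        rw [h5, h1]
        exact Submodule.smul_mem _ _ (Submodule.neg_mem _ hRmem)
      obtain ⟨hu0, hAmem⟩ := hcore hBmem
      exact ⟨hu0, hdep_iff.mpr hAmem⟩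
  · -- reverse direction
    rintro ⟨hu0, hdep⟩
    have hAmem : A ∈ D t := hdep_iff.mp hdep
    have hBA : Bt = A := by
      rw [hBt]
      have h5 : ∀ h ∈ Finset.univ, u (idx h) • deriv (X (idx h)) t = 0 := fun h _ => by
        rw [hu0 h, zero_smul]
      rw [Finset.sum_eq_zero h5, add_zero]
    rw [hD t] at hAmem
    obtain ⟨c, hc⟩ := Submodule.mem_span_range_iff_exists_fun ℝ |>.mp hAmem
    set v : Fin (m - 1) → ℝ := fun i =>
      Sum.elim (fun j => c (jdx j))
        (fun k => c (idx k) - (fderiv ℝ (s k) (t, u')) (0, fun j => c (jdx j)))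
        (e.symm i) with hv
    have hvj : ∀ j, v (jdx j) = c (jdx j) := fun j => by
      rw [hv]; simp only [hej j, Sum.elim_inl]
    have hvk : ∀ k, v (idx k) =
        c (idx k) - (fderiv ℝ (s k) (t, u')) (0, fun j => c (jdx j)) := fun k => by
      rw [hv]; simp only [hek k, Sum.elim_inr]
    have hvjfun : (fun j => v (jdx j)) = fun j => c (jdx j) := funext fun j => hvj j
    have hker : fderiv ℝ σt (t, u) (-1, v) = 0 := by
      rw [hLval (-1) v, hBA, hvjfun]
      simp only [hvj, hvk]
      have h1 : ∀ h : Fin d, ((fderiv ℝ (s h) (t, u')) (0, fun j => c (jdx j))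
          + (c (idx h) - (fderiv ℝ (s h) (t, u')) (0, fun j => c (jdx j))))
          = c (idx h) := fun h => by ring
      simp only [h1]
      have hsum : (∑ j, c (jdx j) • X (jdx j) t) + ∑ h, c (idx h) • X (idx h) t = A := by
        rw [← hc, ← Equiv.sum_comp e (fun i => c i • X i t), Fintype.sum_sum_type]
        simp only [hje, hke]
      rw [add_assoc, hsum, neg_one_smul, neg_add_cancel]
    intro hinj
    have h0 : fderiv ℝ σt (t, u) (0 : ℝ × (Fin (m - 1) → ℝ)) = 0 := map_zero _
    have h6 := hinj (hker.trans h0.symm)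
    have h7 := congrArg Prod.fst h6
    norm_num at h7
end

section
/- Define σ̃ : ℝ × ℝ^{m−1} → ℝ^N by σ̃(t, u^1, …, u^{m−1}) = β(t, u^1, …, u^{m−d−1}) + Σ_{h=m−d}^{m−1} u^h X_h(t). If the differential of σ̃ at a point (t, u^1, …, u^{m−1}) is not injective, then the span of the m partial derivatives of σ̃ at that point has dimension exactly m − 1. -/
open scoped RealInnerProductSpace

/-- With `σ̃(t,u) = β(t, u¹, …, u^{m-d-1}) + Σ_h u^h X_h(t)`: if the
differential of `σ̃` at `(t,u)` is not injective, then the span of the `m` partial derivatives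
of `σ̃` at that point has dimension exactly `m - 1`. -/
theorem stmt_7 (m n d : ℕ) (hm : 2 ≤ m) (hn : 1 ≤ n) (hd1 : 1 ≤ d) (hd2 : d ≤ m - 1)
    (γ : ℝ → EuclideanSpace ℝ (Fin (m + n)))
    (X : Fin (m - 1) → ℝ → EuclideanSpace ℝ (Fin (m + n)))
    (hγ : ContDiff ℝ (⊤ : ℕ∞) γ) (hγ' : ∀ t, ‖deriv γ t‖ = 1)
    (hX : ∀ j, ContDiff ℝ (⊤ : ℕ∞) (X j))
    (hON : ∀ t, Orthonormal ℝ (fun j => X j t))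
    (D : ℝ → Submodule ℝ (EuclideanSpace ℝ (Fin (m + n))))
    (hD : ∀ t, D t = Submodule.span ℝ (Set.range fun j => X j t))
    (ρ : ℝ → Fin (m - 1) → EuclideanSpace ℝ (Fin (m + n)))
    (hρ : ∀ t j, ρ t j = ↑(Submodule.orthogonalProjectionOnto (D t)ᗮ (deriv (X j) t)))
    -- index maps: `jdx` enumerates `{1, …, m-d-1}`, `idx` enumerates `{m-d, …, m-1}`
    (jdx : Fin (m - d - 1) → Fin (m - 1)) (hjdx : ∀ j, (jdx j : ℕ) = (j : ℕ))
    (idx : Fin d → Fin (m - 1)) (hidx : ∀ k, (idx k : ℕ) = m - 1 - d + (k : ℕ))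
    -- degree-`d` assumptions
    (hdeg : ∀ t, Module.finrank ℝ (Submodule.span ℝ (Set.range fun j => ρ t j)) = d)
    (hind : ∀ t, LinearIndependent ℝ fun k => ρ t (idx k))
    -- the striction submanifold `β`, built from smooth functions `s^{m-d}, …, s^{m-1}`
    (s : Fin d → ℝ × (Fin (m - d - 1) → ℝ) → ℝ) (hs : ∀ h, ContDiff ℝ (⊤ : ℕ∞) (s h))
    (β : ℝ → (Fin (m - d - 1) → ℝ) → EuclideanSpace ℝ (Fin (m + n)))
    (hβ : ∀ t u, β t u =
      γ t + (∑ j, u j • X (jdx j) t) + ∑ h, s h (t, u) • X (idx h) t)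
    (hstr : ∀ (h : Fin d) (t : ℝ) (u : Fin (m - d - 1) → ℝ),
      ⟪deriv (fun τ => β τ u) t, ρ t (idx h)⟫ = 0)
    -- the reparametrization `σ̃` of the ruled submanifold in terms of `β`
    (σt : ℝ × (Fin (m - 1) → ℝ) → EuclideanSpace ℝ (Fin (m + n)))
    (hσt : ∀ (t : ℝ) (u : Fin (m - 1) → ℝ),
      σt (t, u) = β t (fun j => u (jdx j)) + ∑ h, u (idx h) • X (idx h) t)
    (t : ℝ) (u : Fin (m - 1) → ℝ)
    (hsing : ¬ Function.Injective (fderiv ℝ σt (t, u)))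
    -- the `m` partial derivatives of `σ̃` at `(t, u)`
    (Pt : EuclideanSpace ℝ (Fin (m + n))) (hPt : Pt = deriv (fun τ => σt (τ, u)) t)
    (Pu : Fin (m - 1) → EuclideanSpace ℝ (Fin (m + n)))
    (hPu : ∀ j, Pu j = deriv (fun r : ℝ => σt (t, u + r • (Pi.single j 1 : Fin (m - 1) → ℝ))) 0) :
    Module.finrank ℝ (Submodule.span ℝ (Set.range (Matrix.vecCons Pt Pu))) = m - 1 := by
  classical
  -- explicit formula for σt
  have hσF : ∀ p : ℝ × (Fin (m - 1) → ℝ), σt p =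
      γ p.1 + (∑ j, p.2 (jdx j) • X (jdx j) p.1)
        + (∑ h, s h (p.1, fun j => p.2 (jdx j)) • X (idx h) p.1)
        + ∑ h, p.2 (idx h) • X (idx h) p.1 := by
    rintro ⟨t', u'⟩
    rw [hσt, hβ]
  -- smoothness of σt
  have hproj : ∀ k : Fin (m - 1),
      ContDiff ℝ (⊤ : ℕ∞) (fun p : ℝ × (Fin (m - 1) → ℝ) => p.2 k) :=
    fun k => (ContinuousLinearMap.proj (R := ℝ) (φ := fun _ : Fin (m - 1) => ℝ)
      k).contDiff.comp contDiff_snd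
  have hsm : ContDiff ℝ (⊤ : ℕ∞) σt := by
    have hfeq : σt = fun p : ℝ × (Fin (m - 1) → ℝ) =>
        γ p.1 + (∑ j, p.2 (jdx j) • X (jdx j) p.1)
          + (∑ h, s h (p.1, fun j => p.2 (jdx j)) • X (idx h) p.1)
          + ∑ h, p.2 (idx h) • X (idx h) p.1 := funext hσF
    rw [hfeq]
    refine ContDiff.add (ContDiff.add (ContDiff.add ?_ ?_) ?_) ?_
    · exact hγ.comp contDiff_fst
    · exact ContDiff.sum fun j _ => (hproj (jdx j)).smul ((hX (jdx j)).comp contDiff_fst)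
    · refine ContDiff.sum fun h _ => ContDiff.smul (f := fun x : ℝ × (Fin (m - 1) → ℝ) => s h (x.1, fun j => x.2 (jdx j))) ?_ ((hX (idx h)).comp contDiff_fst)
      exact (hs h).comp (contDiff_fst.prodMk (contDiff_pi.mpr fun j => hproj (jdx j)))
    · exact ContDiff.sum fun h _ => (hproj (idx h)).smul ((hX (idx h)).comp contDiff_fst)
  set L := fderiv ℝ σt (t, u) with hLdef
  have hL : HasFDerivAt σt L (t, u) := (hsm.differentiable (by simp) (t, u)).hasFDerivAt
  -- Pt as a value of L
  have hPt' : Pt = L (1, 0) := by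
    rw [hPt]
    have h1 : HasDerivAt (fun τ : ℝ => (τ, u)) ((1 : ℝ), (0 : Fin (m - 1) → ℝ)) t :=
      (hasDerivAt_id t).prodMk (hasDerivAt_const t u)
    simpa [Function.comp_def] using (hL.comp_hasDerivAt t h1).deriv
  -- Pu j as a value of L
  have hPu' : ∀ j, Pu j = L (0, Pi.single j 1) := by
    intro j
    rw [hPu]
    have h2 : HasDerivAt (fun r : ℝ => u + r • (Pi.single j 1 : Fin (m - 1) → ℝ))
        (Pi.single j 1) 0 := by
      simpa using
        ((hasDerivAt_id (0 : ℝ)).smul_const (Pi.single j 1 : Fin (m - 1) → ℝ)).const_add u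
    have h1 : HasDerivAt
        (fun r : ℝ => ((t : ℝ), u + r • (Pi.single j 1 : Fin (m - 1) → ℝ)))
        ((0 : ℝ), (Pi.single j 1 : Fin (m - 1) → ℝ)) 0 := (hasDerivAt_const (0:ℝ) t).prodMk h2
    have hL' : HasFDerivAt σt L
        ((fun r : ℝ => ((t : ℝ), u + r • (Pi.single j 1 : Fin (m - 1) → ℝ))) 0) := by
      simpa using hL
    simpa [Function.comp_def] using (hL'.comp_hasDerivAt 0 h1).deriv
  -- decomposition of L over the partials
  have hdecomp : ∀ y : ℝ × (Fin (m - 1) → ℝ), L y = y.1 • Pt + ∑ j, y.2 j • Pu j := by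
    intro y
    have hy : y = y.1 • ((1 : ℝ), (0 : Fin (m - 1) → ℝ))
        + ∑ j, y.2 j • ((0 : ℝ), (Pi.single j 1 : Fin (m - 1) → ℝ)) := by
      have hy2 : (∑ j, y.2 j • ((0 : ℝ), (Pi.single j 1 : Fin (m - 1) → ℝ)))
          = ((0 : ℝ), y.2) := by
        rw [Prod.ext_iff]
        constructor
        · rw [Prod.fst_sum]; simp
        · rw [Prod.snd_sum]
          simp only [Prod.smul_snd]
          simp [← Pi.single_smul, Finset.univ_sum_single]
      rw [hy2]
      ext <;> simp
    have := congrArg L hy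
    rw [map_add, map_smul, map_sum] at this
    simp only [map_smul] at this
    rw [this, ← hPt']
    congr 1
    exact Finset.sum_congr rfl fun j _ => by rw [← hPu']
  -- index arithmetic
  have hne : ∀ (j : Fin (m - d - 1)) (h : Fin d), jdx j ≠ idx h := by
    intro j h hEq
    have h1 := congrArg Fin.val hEq
    rw [hjdx, hidx] at h1
    have h2 := j.isLt
    omega
  have hidxinj : Function.Injective idx := by
    intro a b hab
    have h1 := congrArg Fin.val hab
    rw [hidx, hidx] at h1
    exact Fin.ext (by omega)
  have hjdxinj : Function.Injective jdx := by
    intro a b hab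
    have h1 := congrArg Fin.val hab
    rw [hjdx, hjdx] at h1
    exact Fin.ext h1
  -- the derivative of r ↦ σt (t, u + r • e)
  set c : (Fin (m - 1) → ℝ) → Fin d → ℝ := fun e h =>
    fderiv ℝ (s h) (t, fun j => u (jdx j)) ((0 : ℝ), fun j => e (jdx j)) with hc
  have key : ∀ e : Fin (m - 1) → ℝ,
      HasDerivAt (fun r : ℝ => σt (t, u + r • e))
        ((∑ j, e (jdx j) • X (jdx j) t) + (∑ h, c e h • X (idx h) t)
          + ∑ h, e (idx h) • X (idx h) t) 0 := by
    intro e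
    have hfe : (fun r : ℝ => σt (t, u + r • e)) = fun r : ℝ =>
        γ t + (∑ j, (u (jdx j) + r * e (jdx j)) • X (jdx j) t)
          + (∑ h, s h (t, fun j => u (jdx j) + r * e (jdx j)) • X (idx h) t)
          + ∑ h, (u (idx h) + r * e (idx h)) • X (idx h) t := by
      funext r
      rw [hσF (t, u + r • e)]
      simp only [Pi.add_apply, Pi.smul_apply, smul_eq_mul]
    rw [hfe]
    have h1 : ∀ k : Fin (m - 1), HasDerivAt (fun r : ℝ => u k + r * e k) (e k) 0 := by
      intro k
      simpa using ((hasDerivAt_id (0 : ℝ)).mul_const (e k)).const_add (u k)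
    have h2 : HasDerivAt (fun r : ℝ => ∑ j, (u (jdx j) + r * e (jdx j)) • X (jdx j) t)
        (∑ j, e (jdx j) • X (jdx j) t) 0 :=
      HasDerivAt.fun_sum fun j _ => (h1 (jdx j)).smul_const _
    have h4 : HasDerivAt (fun r : ℝ => ∑ h, (u (idx h) + r * e (idx h)) • X (idx h) t)
        (∑ h, e (idx h) • X (idx h) t) 0 :=
      HasDerivAt.fun_sum fun h _ => (h1 (idx h)).smul_const _
    have h3 : HasDerivAt
        (fun r : ℝ => ∑ h, s h (t, fun j => u (jdx j) + r * e (jdx j)) • X (idx h) t)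
        (∑ h, c e h • X (idx h) t) 0 := by
      refine HasDerivAt.fun_sum fun h _ => HasDerivAt.smul_const ?_ _
      have hin : HasDerivAt (fun r : ℝ => ((t : ℝ), fun j => u (jdx j) + r * e (jdx j)))
          ((0 : ℝ), fun j => e (jdx j)) 0 :=
        (hasDerivAt_const (0:ℝ) t).prodMk (hasDerivAt_pi.mpr fun j => h1 (jdx j))
      have hout : HasFDerivAt (s h) (fderiv ℝ (s h) (t, fun j => u (jdx j)))
          ((fun r : ℝ => ((t : ℝ), fun j => u (jdx j) + r * e (jdx j))) 0) := by
        have := ((hs h).differentiable (by simp) (t, fun j => u (jdx j))).hasFDerivAt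
        simpa using this
      exact hout.comp_hasDerivAt 0 hin
    simpa using (((hasDerivAt_const (0 : ℝ) (γ t)).fun_add h2).fun_add h3).fun_add h4
  have hPuval : ∀ j, Pu j = (∑ j', (Pi.single j (1 : ℝ) : Fin (m - 1) → ℝ) (jdx j') • X (jdx j') t)
      + (∑ h, c (Pi.single j 1 : Fin (m - 1) → ℝ) h • X (idx h) t)
      + ∑ h, (Pi.single j (1 : ℝ) : Fin (m - 1) → ℝ) (idx h) • X (idx h) t := by
    intro j
    rw [hPu]
    exact (key (Pi.single j 1)).deriv
  -- membership of the frame vectors in the span V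
  set V := Submodule.span ℝ (Set.range (Matrix.vecCons Pt Pu)) with hV
  have hPtV : Pt ∈ V := Submodule.subset_span ⟨0, Matrix.cons_val_zero Pt Pu⟩
  have hPuV : ∀ j, Pu j ∈ V := fun j =>
    Submodule.subset_span ⟨j.succ, Matrix.cons_val_succ Pt Pu j⟩
  have hXidxval : ∀ h0 : Fin d, Pu (idx h0) = X (idx h0) t := by
    intro h0
    rw [hPuval (idx h0)]
    have e0 : ∀ j', (Pi.single (idx h0) (1 : ℝ) : Fin (m - 1) → ℝ) (jdx j') = 0 := fun j' =>
      Pi.single_eq_of_ne (hne j' h0) 1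
    have ec : ∀ h, c (Pi.single (idx h0) 1 : Fin (m - 1) → ℝ) h = 0 := by
      intro h
      have hz : (fun j : Fin (m - d - 1) => (Pi.single (idx h0) (1 : ℝ) : Fin (m - 1) → ℝ) (jdx j))
          = (0 : Fin (m - d - 1) → ℝ) := funext fun j => e0 j
      rw [hc]
      simp only [hz]
      have : (((0 : ℝ), (0 : Fin (m - d - 1) → ℝ)) : ℝ × (Fin (m - d - 1) → ℝ)) = 0 := rfl
      rw [this, map_zero]
    have e3 : ∀ h, (Pi.single (idx h0) (1 : ℝ) : Fin (m - 1) → ℝ) (idx h) = if h = h0 then 1 else 0 := by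
      intro h
      by_cases hh : h = h0
      · subst hh; simp
      · rw [Pi.single_eq_of_ne (fun hEq => hh (hidxinj hEq)) 1, if_neg hh]
    simp only [e0, ec, e3, zero_smul, Finset.sum_const_zero, zero_add, ite_smul, one_smul,
      Finset.sum_ite_eq', Finset.mem_univ, if_true]
  have hXidxV : ∀ h0 : Fin d, X (idx h0) t ∈ V := fun h0 => hXidxval h0 ▸ hPuV (idx h0)
  have hXjdxV : ∀ j0 : Fin (m - d - 1), X (jdx j0) t ∈ V := by
    intro j0
    have h1 : Pu (jdx j0) = X (jdx j0) t + ∑ h, c (Pi.single (jdx j0) 1 : Fin (m - 1) → ℝ) h • X (idx h) t := by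
      rw [hPuval (jdx j0)]
      have e0 : ∀ h, (Pi.single (jdx j0) (1 : ℝ) : Fin (m - 1) → ℝ) (idx h) = 0 := fun h =>
        Pi.single_eq_of_ne (Ne.symm (hne j0 h)) 1
      have e1 : ∀ j', (Pi.single (jdx j0) (1 : ℝ) : Fin (m - 1) → ℝ) (jdx j') = if j' = j0 then 1 else 0 := by
        intro j'
        by_cases hh : j' = j0
        · subst hh; simp
        · rw [Pi.single_eq_of_ne (fun hEq => hh (hjdxinj hEq)) 1, if_neg hh]
      simp only [e0, e1, zero_smul, Finset.sum_const_zero, add_zero, ite_smul, one_smul,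
        Finset.sum_ite_eq', Finset.mem_univ, if_true]
    have h2 : X (jdx j0) t = Pu (jdx j0) - ∑ h, c (Pi.single (jdx j0) 1 : Fin (m - 1) → ℝ) h • X (idx h) t := by
      rw [h1]; abel
    rw [h2]
    exact Submodule.sub_mem V (hPuV _)
      (Submodule.sum_mem V fun h _ => Submodule.smul_mem V _ (hXidxV h))
  have hXV : ∀ k : Fin (m - 1), X k t ∈ V := by
    intro k
    by_cases hk : (k : ℕ) < m - d - 1
    · have : k = jdx ⟨(k : ℕ), hk⟩ := Fin.ext (by rw [hjdx])
      rw [this]; exact hXjdxV _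
    · have hk2 := k.isLt
      have hlt : (k : ℕ) - (m - 1 - d) < d := by omega
      have : k = idx ⟨(k : ℕ) - (m - 1 - d), hlt⟩ := by
        refine Fin.ext ?_
        rw [hidx]
        show (k : ℕ) = m - 1 - d + ((k : ℕ) - (m - 1 - d))
        omega
      rw [this]; exact hXidxV _
  -- lower bound
  have hle1 : (m - 1 : ℕ) ≤ Module.finrank ℝ V := by
    have hsp : Submodule.span ℝ (Set.range fun k => X k t) ≤ V := by
      rw [Submodule.span_le]
      rintro _ ⟨k, rfl⟩
      exact hXV k
    have hfr : Module.finrank ℝ (Submodule.span ℝ (Set.range fun k => X k t)) = m - 1 := by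
      rw [finrank_span_eq_card (hON t).linearIndependent, Fintype.card_fin]
    exact hfr ▸ Submodule.finrank_mono hsp
  -- upper bound
  obtain ⟨y1, y2, hyeq, hyne⟩ := Function.not_injective_iff.mp hsing
  have hLy : L (y1 - y2) = 0 := by
    rw [map_sub, hyeq, sub_self]
  have hy0 : y1 - y2 ≠ 0 := sub_ne_zero.mpr hyne
  have hdep : ¬ LinearIndependent ℝ (Matrix.vecCons Pt Pu) := by
    intro hli
    have hz := Fintype.linearIndependent_iff.mp hli (Matrix.vecCons (y1 - y2).1 (y1 - y2).2) ?_
    · apply hy0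
      have ha : (y1 - y2).1 = 0 := by simpa using hz 0
      have hb : ∀ j, (y1 - y2).2 j = 0 := fun j => by simpa using hz j.succ
      rw [Prod.ext_iff]
      exact ⟨ha, funext hb⟩
    · rw [Fin.sum_univ_succ]
      simp only [Matrix.cons_val_zero, Matrix.cons_val_succ]
      rw [← hdecomp (y1 - y2), hLy]
  have hneq : Module.finrank ℝ V ≠ m - 1 + 1 := by
    intro hEq
    refine hdep (linearIndependent_iff_card_eq_finrank_span.mpr ?_)
    rw [Fintype.card_fin]
    simp only [Set.finrank]
    rw [← hV]
    exact hEq.symm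
  have hcardle : Module.finrank ℝ V ≤ m - 1 + 1 := by
    have h := finrank_span_le_card (R := ℝ) (Set.range (Matrix.vecCons Pt Pu))
    rw [← hV] at h
    refine h.trans ?_
    rw [Set.toFinset_range]
    exact (Finset.card_image_le).trans (by simp)
  omega
end

section
/- For every (t, u) ∈ ℝ × ℝ^{m−d−1}, the span of the m − d partial derivatives of β at (t, u) (namely ∂β/∂t and ∂β/∂u^j for j = 1, …, m−d−1) has dimension at least m − d − 1; that is, the differential of the striction submanifold β has rank at least m − d − 1 everywhere. -/
open scoped RealInnerProductSpace

/-- For every `(t,u)`, the span of the `m - d` partial derivatives of the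
striction submanifold `β` at `(t,u)` has dimension at least `m - d - 1`; i.e. the differential
of `β` has rank at least `m - d - 1` everywhere. -/
theorem stmt_8 (m n d : ℕ) (hm : 2 ≤ m) (hn : 1 ≤ n) (hd1 : 1 ≤ d) (hd2 : d ≤ m - 1)
    (γ : ℝ → EuclideanSpace ℝ (Fin (m + n)))
    (X : Fin (m - 1) → ℝ → EuclideanSpace ℝ (Fin (m + n)))
    (hγ : ContDiff ℝ (⊤ : ℕ∞) γ) (hγ' : ∀ t, ‖deriv γ t‖ = 1)
    (hX : ∀ j, ContDiff ℝ (⊤ : ℕ∞) (X j))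
    (hON : ∀ t, Orthonormal ℝ (fun j => X j t))
    -- index maps: `jdx` enumerates `{1, …, m-d-1}`, `idx` enumerates `{m-d, …, m-1}`
    (jdx : Fin (m - d - 1) → Fin (m - 1)) (hjdx : ∀ j, (jdx j : ℕ) = (j : ℕ))
    (idx : Fin d → Fin (m - 1)) (hidx : ∀ k, (idx k : ℕ) = m - 1 - d + (k : ℕ))
    -- the striction submanifold `β`, built from smooth functions `s^{m-d}, …, s^{m-1}`
    (s : Fin d → ℝ × (Fin (m - d - 1) → ℝ) → ℝ) (hs : ∀ h, ContDiff ℝ (⊤ : ℕ∞) (s h))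
    (β : ℝ → (Fin (m - d - 1) → ℝ) → EuclideanSpace ℝ (Fin (m + n)))
    (hβ : ∀ t u, β t u =
      γ t + (∑ j, u j • X (jdx j) t) + ∑ h, s h (t, u) • X (idx h) t) :
    ∀ (t : ℝ) (u : Fin (m - d - 1) → ℝ),
      m - d - 1 ≤ Module.finrank ℝ (Submodule.span ℝ (Set.range
        (Matrix.vecCons (deriv (fun τ => β τ u) t)
          (fun j => deriv (fun r : ℝ =>
            β t (u + r • (Pi.single j 1 : Fin (m - d - 1) → ℝ))) 0)))) := by
  intro t u
  set v : Fin (m - d - 1) → EuclideanSpace ℝ (Fin (m + n)) := fun j => deriv (fun r : ℝ =>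
      β t (u + r • (Pi.single j 1 : Fin (m - d - 1) → ℝ))) 0 with hv
  -- Step 1: compute v j
  have key : ∀ j : Fin (m - d - 1), ∃ c : Fin d → ℝ,
      v j = X (jdx j) t + ∑ h, c h • X (idx h) t := by
    intro j
    set c : Fin d → ℝ := fun h =>
      deriv (fun r : ℝ => s h (t, u + r • (Pi.single j 1 : Fin (m - d - 1) → ℝ))) 0 with hc
    refine ⟨c, ?_⟩
    have hline : Differentiable ℝ (fun r : ℝ =>
        (t, u + r • (Pi.single j 1 : Fin (m - d - 1) → ℝ))) := by
      apply Differentiable.prodMk (differentiable_const t)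
      exact (differentiable_const u).add (differentiable_id.smul_const _)
    have hsc : ∀ h : Fin d, HasDerivAt
        (fun r : ℝ => s h (t, u + r • (Pi.single j 1 : Fin (m - d - 1) → ℝ))) (c h) 0 := by
      intro h
      exact ((((hs h).differentiable (by simp)).comp hline) 0).hasDerivAt
    have hder : HasDerivAt (fun r : ℝ =>
        β t (u + r • (Pi.single j 1 : Fin (m - d - 1) → ℝ)))
        (((0 : EuclideanSpace ℝ (Fin (m + n))) + (∑ j' : Fin (m - d - 1),
            ((0 + 1 * ((Pi.single j 1 : Fin (m - d - 1) → ℝ) j')) • X (jdx j') t))) +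
          ∑ h, c h • X (idx h) t) 0 := by
      have heq : (fun r : ℝ => β t (u + r • (Pi.single j 1 : Fin (m - d - 1) → ℝ))) =
          (fun r : ℝ => γ t + (∑ j' : Fin (m - d - 1),
              (u j' + r * (Pi.single j 1 : Fin (m - d - 1) → ℝ) j') • X (jdx j') t) +
            ∑ h, s h (t, u + r • (Pi.single j 1 : Fin (m - d - 1) → ℝ)) • X (idx h) t) := by
        funext r
        rw [hβ]
        simp [Pi.add_apply, smul_eq_mul]
      rw [heq]
      apply HasDerivAt.add
      · apply HasDerivAt.add (hasDerivAt_const 0 (γ t))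
        apply HasDerivAt.fun_sum
        intro j' _
        exact (((hasDerivAt_const 0 (u j')).add
          ((hasDerivAt_id 0).mul_const _)).smul_const _)
      · apply HasDerivAt.fun_sum
        intro h _
        exact (hsc h).smul_const _
    have hvj : v j = ((0 : EuclideanSpace ℝ (Fin (m + n))) + (∑ j' : Fin (m - d - 1),
            ((0 + 1 * ((Pi.single j 1 : Fin (m - d - 1) → ℝ) j')) • X (jdx j') t))) +
          ∑ h, c h • X (idx h) t := hder.deriv
    rw [hvj]
    have hsum : (∑ j' : Fin (m - d - 1),
        ((0 + 1 * ((Pi.single j 1 : Fin (m - d - 1) → ℝ) j')) • X (jdx j') t)) = X (jdx j) t := by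
      simp only [zero_add, one_mul]
      rw [Finset.sum_eq_single j]
      · simp
      · intro j' _ hne
        rw [Pi.single_eq_of_ne hne]
        simp
      · intro hj; exact absurd (Finset.mem_univ j) hj
    rw [hsum]
    rw [zero_add]
  -- jdx is injective and disjoint from idx
  have hjdx_inj : Function.Injective jdx := fun a b hab => by
    have := congrArg (Fin.val) hab
    rw [hjdx, hjdx] at this
    exact Fin.ext this
  have hdisj : ∀ (j : Fin (m - d - 1)) (h : Fin d), jdx j ≠ idx h := by
    intro j h hne
    have := congrArg (Fin.val) hne
    rw [hjdx, hidx] at this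
    have hj := j.isLt
    omega
  -- Step 2: linear independence of v
  have hite := orthonormal_iff_ite.mp (hON t)
  have hiv : ∀ (j' j : Fin (m - d - 1)),
      ⟪X (jdx j') t, v j⟫ = if j' = j then (1:ℝ) else 0 := by
    intro j' j
    obtain ⟨c, hcv⟩ := key j
    rw [hcv, inner_add_right, inner_sum, hite]
    have hz : ∀ h ∈ Finset.univ, ⟪X (jdx j') t, c h • X (idx h) t⟫ = (0:ℝ) := by
      intro h _
      rw [real_inner_smul_right, hite]
      simp [hdisj j' h]
    rw [Finset.sum_congr rfl hz]
    simp [hjdx_inj.eq_iff]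
  have hli : LinearIndependent ℝ v := by
    set f : EuclideanSpace ℝ (Fin (m + n)) →ₗ[ℝ] (Fin (m - d - 1) → ℝ) :=
      LinearMap.pi (fun j' => ((innerSL ℝ (X (jdx j') t)) :
        EuclideanSpace ℝ (Fin (m + n)) →L[ℝ] ℝ).toLinearMap) with hf
    have hcomp : f ∘ v = fun j => Pi.single j (1:ℝ) := by
      funext j j'
      simp only [hf, Function.comp_apply, LinearMap.pi_apply,
        ContinuousLinearMap.coe_coe, innerSL_apply_apply]
      rw [hiv j' j, Pi.single_apply]
    have hone : LinearIndependent ℝ (f ∘ v) := by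
      rw [hcomp]
      have hb := (Pi.basisFun ℝ (Fin (m - d - 1))).linearIndependent
      have hbe : (⇑(Pi.basisFun ℝ (Fin (m - d - 1))) : Fin (m - d - 1) → (Fin (m - d - 1) → ℝ)) =
          fun j => Pi.single j (1:ℝ) := by
        funext j
        simp [Pi.basisFun_apply]
      rwa [hbe] at hb
    exact LinearIndependent.of_comp f hone
  -- Step 3: conclude via finrank
  have hspan : Submodule.span ℝ (Set.range v) ≤ Submodule.span ℝ (Set.range
      (Matrix.vecCons (deriv (fun τ => β τ u) t) v)) := by
    apply Submodule.span_mono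
    rintro x ⟨j, rfl⟩
    exact ⟨j.succ, by simp⟩
  have hfr : Module.finrank ℝ (Submodule.span ℝ (Set.range v)) = m - d - 1 := by
    rw [finrank_span_eq_card hli]
    simp
  calc m - d - 1 = Module.finrank ℝ (Submodule.span ℝ (Set.range v)) := hfr.symm
    _ ≤ _ := Submodule.finrank_mono hspan
end

section
/- Fix (t, u) ∈ ℝ × ℝ^{m−1} and suppose the m partial derivatives of σ at (t, u) are linearly independent (i.e., (t,u) is a regular point). Let T ⊆ ℝ^N be the span of these partial derivatives and let π_N denote the orthogonal projection of ℝ^N onto T^⊥. Let N¹ be the span of π_N(∂²σ/∂t²(t,u)) together with π_N(∂²σ/∂t∂u^j(t,u)) for j = 1, …, m−1 (this is the first normal space of σ at the point, since all second partial derivatives of σ in ruling directions vanish). If dim span(ρ_t X_1, …, ρ_t X_{m−1}) = d, then d − 1 ≤ dim N¹ ≤ d + 1. -/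
open scoped RealInnerProductSpace

/-- At a regular point `(t,u)` of the ruled submanifold `σ`, let `T` be the
tangent space (span of the `m` partial derivatives), `π_N` the orthogonal projection onto
`Tᗮ`, and `N1` the first normal space, spanned by `π_N(∂²σ/∂t²)` and the `π_N(∂²σ/∂t∂uʲ)`.
If `dim span(ρ_t X₁, …, ρ_t X_{m-1}) = d`, then `d - 1 ≤ dim N1 ≤ d + 1`. -/
theorem stmt_9 (m n d : ℕ) (hm : 2 ≤ m) (hn : 1 ≤ n) (hd : d ≤ m - 1)
    (γ : ℝ → EuclideanSpace ℝ (Fin (m + n)))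
    (X : Fin (m - 1) → ℝ → EuclideanSpace ℝ (Fin (m + n)))
    (hγ : ContDiff ℝ (⊤ : ℕ∞) γ) (hγ' : ∀ t, ‖deriv γ t‖ = 1)
    (hX : ∀ j, ContDiff ℝ (⊤ : ℕ∞) (X j))
    (hON : ∀ t, Orthonormal ℝ (fun j => X j t))
    (D : ℝ → Submodule ℝ (EuclideanSpace ℝ (Fin (m + n))))
    (hD : ∀ t, D t = Submodule.span ℝ (Set.range fun j => X j t))
    (ρ : ℝ → Fin (m - 1) → EuclideanSpace ℝ (Fin (m + n)))
    (hρ : ∀ t j, ρ t j = ↑(Submodule.orthogonalProjectionOnto (D t)ᗮ (deriv (X j) t)))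
    -- the ruled submanifold `σ`
    (σ : ℝ → (Fin (m - 1) → ℝ) → EuclideanSpace ℝ (Fin (m + n)))
    (hσ : ∀ t u, σ t u = γ t + ∑ j, u j • X j t)
    (t : ℝ) (u : Fin (m - 1) → ℝ)
    -- the `m` first-order partial derivatives of `σ` at `(t, u)`
    (Pt : EuclideanSpace ℝ (Fin (m + n))) (hPt : Pt = deriv (fun τ => σ τ u) t)
    (Pu : Fin (m - 1) → EuclideanSpace ℝ (Fin (m + n)))
    (hPu : ∀ j, Pu j = deriv (fun r : ℝ =>
      σ t (u + r • (Pi.single j 1 : Fin (m - 1) → ℝ))) 0)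
    -- `(t, u)` is a regular point
    (hreg : LinearIndependent ℝ (Matrix.vecCons Pt Pu))
    -- the tangent space `T` and the normal projection `π_N`
    (T : Submodule ℝ (EuclideanSpace ℝ (Fin (m + n))))
    (hT : T = Submodule.span ℝ (Set.range (Matrix.vecCons Pt Pu)))
    (πN : EuclideanSpace ℝ (Fin (m + n)) → EuclideanSpace ℝ (Fin (m + n)))
    (hπN : ∀ v, πN v = ↑(Submodule.orthogonalProjectionOnto Tᗮ v))
    -- the second-order partial derivatives `∂²σ/∂t²` and `∂²σ/∂t∂uʲ` at `(t, u)`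
    (Ptt : EuclideanSpace ℝ (Fin (m + n)))
    (hPtt : Ptt = deriv (fun τ => deriv (fun τ' => σ τ' u) τ) t)
    (Ptu : Fin (m - 1) → EuclideanSpace ℝ (Fin (m + n)))
    (hPtu : ∀ j, Ptu j = deriv (fun τ => deriv (fun r : ℝ =>
      σ τ (u + r • (Pi.single j 1 : Fin (m - 1) → ℝ))) 0) t)
    -- the first normal space `N1`
    (N1 : Submodule ℝ (EuclideanSpace ℝ (Fin (m + n))))
    (hN1 : N1 = Submodule.span ℝ (Set.range (Matrix.vecCons (πN Ptt) (fun j => πN (Ptu j)))))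
    (hdeg : Module.finrank ℝ (Submodule.span ℝ (Set.range fun j => ρ t j)) = d) :
    d - 1 ≤ Module.finrank ℝ N1 ∧ Module.finrank ℝ N1 ≤ d + 1 := by
  classical
  -- Step 0: pointwise formula for σ along ruling directions
  have hσrw : ∀ (j : Fin (m - 1)) (τ r : ℝ),
      σ τ (u + r • (Pi.single j 1 : Fin (m - 1) → ℝ)) = σ τ u + r • X j τ := by
    intro j τ r
    rw [hσ, hσ, add_assoc]
    congr 1
    have h1 : ∀ k : Fin (m - 1),
        ((u + r • (Pi.single j 1 : Fin (m - 1) → ℝ)) k) • X k τ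
          = u k • X k τ + (if k = j then r • X j τ else 0) := by
      intro k
      by_cases h : k = j
      · subst h; simp [Pi.single_apply, add_smul]
      · simp [Pi.single_apply, h]
    rw [Finset.sum_congr rfl fun k _ => h1 k, Finset.sum_add_distrib,
      Finset.sum_ite_eq' Finset.univ j]
    simp
  -- inner derivatives in ruling directions
  have hder : ∀ (τ : ℝ) (j : Fin (m - 1)),
      deriv (fun r : ℝ => σ τ (u + r • (Pi.single j 1 : Fin (m - 1) → ℝ))) 0 = X j τ := by
    intro τ j
    have heq : (fun r : ℝ => σ τ (u + r • (Pi.single j 1 : Fin (m - 1) → ℝ)))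
        = fun r : ℝ => σ τ u + r • X j τ := funext fun r => hσrw j τ r
    rw [heq]
    have h := (((hasDerivAt_id (0 : ℝ)).smul_const (X j τ)).const_add (σ τ u)).deriv
    simpa using h
  have hPu' : ∀ j, Pu j = X j t := fun j => (hPu j).trans (hder t j)
  have hPtu' : ∀ j, Ptu j = deriv (X j) t := by
    intro j
    rw [hPtu j]
    exact congrFun (congrArg deriv (funext fun τ => hder τ j)) t
  -- D t is contained in T
  have hDT : D t ≤ T := by
    rw [hD, hT]
    apply Submodule.span_mono
    rintro _ ⟨j, rfl⟩
    exact ⟨j.succ, by simp [Matrix.cons_val_succ, hPu' j]⟩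
  -- the span of the ρ's
  set R : Submodule ℝ (EuclideanSpace ℝ (Fin (m + n))) :=
    Submodule.span ℝ (Set.range fun j => ρ t j) with hR
  have hRD : R ≤ (D t)ᗮ := by
    rw [hR]
    apply Submodule.span_le.mpr
    rintro _ ⟨j, rfl⟩
    show ρ t j ∈ (D t)ᗮ
    rw [hρ]
    exact SetLike.coe_mem _
  -- the projection onto Tᗮ as a linear map
  set L : EuclideanSpace ℝ (Fin (m + n)) →ₗ[ℝ] EuclideanSpace ℝ (Fin (m + n)) :=
    Tᗮ.subtype ∘ₗ (Submodule.orthogonalProjectionOnto Tᗮ).toLinearMap with hL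
  have hLker : LinearMap.ker L = T := by
    ext x
    simp only [hL, LinearMap.mem_ker, LinearMap.comp_apply, Submodule.coe_subtype,
      ContinuousLinearMap.coe_coe, ZeroMemClass.coe_eq_zero]
    rw [Submodule.orthogonalProjectionOnto_eq_zero_iff, Submodule.orthogonal_orthogonal]
  have hπNL : ∀ v, πN v = L v := fun v => hπN v
  -- πN (Ptu j) = L (ρ t j)
  have hLPtu : ∀ j, πN (Ptu j) = L (ρ t j) := by
    intro j
    rw [hπNL, hPtu' j]
    have hmem : deriv (X j) t - ρ t j ∈ T := by
      apply hDT
      rw [hρ]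
      have h2 := Submodule.sub_starProjection_mem_orthogonal (K := (D t)ᗮ) (deriv (X j) t)
      rwa [Submodule.orthogonal_orthogonal] at h2
    have hzero : L (deriv (X j) t - ρ t j) = 0 := by
      rw [← LinearMap.mem_ker, hLker]; exact hmem
    have hsplit : deriv (X j) t = ρ t j + (deriv (X j) t - ρ t j) := by abel
    rw [hsplit, map_add, hzero, add_zero]
  -- the span of the πN (Ptu j) is the image of R under L
  have hS : Submodule.span ℝ (Set.range fun j => πN (Ptu j)) = Submodule.map L R := by
    rw [hR, Submodule.map_span, ← Set.range_comp]
    exact congrArg (Submodule.span ℝ) (congrArg Set.range (funext fun j => hLPtu j))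
  -- T ⊓ (D t)ᗮ has dimension at most 1
  set P : EuclideanSpace ℝ (Fin (m + n)) →ₗ[ℝ] EuclideanSpace ℝ (Fin (m + n)) :=
    (D t)ᗮ.subtype ∘ₗ (Submodule.orthogonalProjectionOnto (D t)ᗮ).toLinearMap with hP
  have hsing : ∀ a : EuclideanSpace ℝ (Fin (m + n)),
      Module.finrank ℝ (Submodule.span ℝ ({a} : Set (EuclideanSpace ℝ (Fin (m + n))))) ≤ 1 := by
    intro a
    by_cases h : a = 0
    · subst h
      rw [Submodule.span_zero_singleton]
      simp [finrank_bot]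
    · rw [finrank_span_singleton h]
  have hTD1 : Module.finrank ℝ ↥(T ⊓ (D t)ᗮ) ≤ 1 := by
    have hle : T ⊓ (D t)ᗮ ≤ Submodule.span ℝ {P Pt} := by
      rintro x ⟨hxT, hxD⟩
      have hx' : P x = x := Submodule.starProjection_eq_self_iff.mpr hxD
      have hmaple : Submodule.map P T ≤ Submodule.span ℝ {P Pt} := by
        rw [hT, Submodule.map_span]
        apply Submodule.span_le.mpr
        rintro _ ⟨_, ⟨i, rfl⟩, rfl⟩
        refine Fin.cases ?_ ?_ i
        · exact Submodule.subset_span rfl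
        · intro j
          have hXD : X j t ∈ D t := by
            rw [hD]; exact Submodule.subset_span ⟨j, rfl⟩
          have hz : P (Matrix.vecCons Pt Pu j.succ) = 0 := by
            simp only [Matrix.cons_val_succ, hPu' j, hP, LinearMap.comp_apply,
              Submodule.coe_subtype, ContinuousLinearMap.coe_coe]
            rw [show (Submodule.orthogonalProjectionOnto (D t)ᗮ) (X j t) = 0 from
              Submodule.orthogonalProjectionOnto_eq_zero_iff.mpr
                (by rw [Submodule.orthogonal_orthogonal]; exact hXD)]
            rfl
          rw [hz]
          exact Submodule.zero_mem _
      exact hmaple ⟨x, hxT, hx'⟩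
    exact le_trans (Submodule.finrank_mono hle) (hsing _)
  -- rank-nullity for L restricted to R
  have hfin : Module.finrank ℝ ↥R
      = Module.finrank ℝ ↥(Submodule.map L R)
        + Module.finrank ℝ ↥(LinearMap.ker (L.domRestrict R)) := by
    have h3 := LinearMap.finrank_range_add_finrank_ker (L.domRestrict R)
    rw [LinearMap.range_domRestrict] at h3
    omega
  have hkerle : Module.finrank ℝ ↥(LinearMap.ker (L.domRestrict R)) ≤ 1 := by
    have hm2 : Submodule.map R.subtype (LinearMap.ker (L.domRestrict R)) ≤ T ⊓ (D t)ᗮ := by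
      rintro _ ⟨y, hker, rfl⟩
      refine ⟨?_, hRD y.2⟩
      have hy : L (y : EuclideanSpace ℝ (Fin (m + n))) = 0 := hker
      rw [← hLker]
      exact hy
    calc Module.finrank ℝ ↥(LinearMap.ker (L.domRestrict R))
        = Module.finrank ℝ ↥(Submodule.map R.subtype (LinearMap.ker (L.domRestrict R))) :=
          (Submodule.finrank_map_subtype_eq R _).symm
      _ ≤ Module.finrank ℝ ↥(T ⊓ (D t)ᗮ) := Submodule.finrank_mono hm2
      _ ≤ 1 := hTD1
  have hRd : Module.finrank ℝ ↥R = d := hdeg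
  -- lower bound
  have hSN : Submodule.span ℝ (Set.range fun j => πN (Ptu j)) ≤ N1 := by
    rw [hN1]
    apply Submodule.span_mono
    rintro _ ⟨j, rfl⟩
    exact ⟨j.succ, by simp [Matrix.cons_val_succ]⟩
  have hlow : d - 1 ≤ Module.finrank ℝ N1 := by
    have h1 : Module.finrank ℝ ↥(Submodule.map L R) ≤ Module.finrank ℝ N1 := by
      rw [← hS]
      exact Submodule.finrank_mono hSN
    omega
  -- upper bound
  have hup : Module.finrank ℝ N1 ≤ d + 1 := by
    have hrange : Set.range (Matrix.vecCons (πN Ptt) fun j => πN (Ptu j))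
        = insert (πN Ptt) (Set.range fun j => πN (Ptu j)) := by
      rw [Matrix.range_cons, Set.singleton_union]
    rw [hN1, hrange, Submodule.span_insert]
    have h4 := Submodule.finrank_sup_add_finrank_inf_eq
      (Submodule.span ℝ {πN Ptt}) (Submodule.span ℝ (Set.range fun j => πN (Ptu j)))
    have h5 : Module.finrank ℝ
        ↥(Submodule.span ℝ (Set.range fun j => πN (Ptu j))) ≤ d := by
      rw [hS]
      calc Module.finrank ℝ ↥(Submodule.map L R) ≤ Module.finrank ℝ ↥R :=
            Submodule.finrank_map_le L R
        _ = d := hRd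
    have h6 := hsing (πN Ptt)
    omega
  exact ⟨hlow, hup⟩
end

section
/- Suppose that for every t the vectors γ̇(t), X_1(t), …, X_{m−1}(t) are linearly independent, and that for every j ∈ {1, …, m−1} and every t the family (Ẋ_j(t), γ̇(t), X_1(t), …, X_{m−1}(t)) is linearly dependent (the rank-one condition of Lemma 4.4). Then dim span(ρ_t X_1, …, ρ_t X_{m−1}) ≤ 1 for every t. In other words, a noncylindrical rank-one submanifold is necessarily of degree one. -/
open scoped RealInnerProductSpace

/-- If for every `t` the vectors `γ̇(t), X₁(t), …, X_{m-1}(t)` are linearly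
independent and for every `j` the family `(Ẋⱼ(t), γ̇(t), X₁(t), …, X_{m-1}(t))` is linearly
dependent (the rank-one condition), then `dim span(ρ_t X₁, …, ρ_t X_{m-1}) ≤ 1` for every `t`:
a noncylindrical rank-one submanifold is necessarily of degree one. -/
theorem stmt_10 (m n : ℕ) (hm : 2 ≤ m) (hn : 1 ≤ n)
    (γ : ℝ → EuclideanSpace ℝ (Fin (m + n)))
    (X : Fin (m - 1) → ℝ → EuclideanSpace ℝ (Fin (m + n)))
    (hγ : ContDiff ℝ (⊤ : ℕ∞) γ) (hγ' : ∀ t, ‖deriv γ t‖ = 1)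
    (hX : ∀ j, ContDiff ℝ (⊤ : ℕ∞) (X j))
    (hON : ∀ t, Orthonormal ℝ (fun j => X j t))
    (D : ℝ → Submodule ℝ (EuclideanSpace ℝ (Fin (m + n))))
    (hD : ∀ t, D t = Submodule.span ℝ (Set.range fun j => X j t))
    (ρ : ℝ → Fin (m - 1) → EuclideanSpace ℝ (Fin (m + n)))
    (hρ : ∀ t j, ρ t j = ↑(Submodule.orthogonalProjection (D t)ᗮ (deriv (X j) t)))
    (hreg : ∀ t, LinearIndependent ℝ (Matrix.vecCons (deriv γ t) (fun j => X j t)))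
    (hrank1 : ∀ (j : Fin (m - 1)) (t : ℝ),
      ¬ LinearIndependent ℝ
        (Matrix.vecCons (deriv (X j) t) (Matrix.vecCons (deriv γ t) (fun i => X i t)))) :
    ∀ t, Module.finrank ℝ (Submodule.span ℝ (Set.range fun j => ρ t j)) ≤ 1 := by
  intro t
  set L : EuclideanSpace ℝ (Fin (m + n)) →ₗ[ℝ] EuclideanSpace ℝ (Fin (m + n)) :=
    (D t)ᗮ.subtype ∘ₗ (Submodule.orthogonalProjection (D t)ᗮ).toLinearMap with hL
  have hρL : ∀ j, ρ t j = L (deriv (X j) t) := fun j => by simp [hρ, hL]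
  have hXmem : ∀ i, X i t ∈ D t := fun i => by
    rw [hD]; exact Submodule.subset_span ⟨i, rfl⟩
  have hLX : ∀ i, L (X i t) = 0 := fun i => by
    simp [hL, Submodule.orthogonalProjectionOnto_apply_of_mem_orthogonal
      (Submodule.le_orthogonal_orthogonal (D t) (hXmem i))]
  have hmem : ∀ j, deriv (X j) t ∈
      Submodule.span ℝ (Set.range (Matrix.vecCons (deriv γ t) fun i => X i t)) := by
    intro j
    have h := hrank1 j t
    rw [show Matrix.vecCons (deriv (X j) t) (Matrix.vecCons (deriv γ t) fun i => X i t)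
        = Fin.cons (deriv (X j) t) (Matrix.vecCons (deriv γ t) fun i => X i t) from rfl,
      linearIndependent_fin_cons] at h
    push_neg at h
    exact h (hreg t)
  have key : ∀ j, ρ t j ∈ Submodule.span ℝ {L (deriv γ t)} := by
    intro j
    rw [hρL]
    have hmap := Submodule.mem_map_of_mem (f := L) (hmem j)
    rw [Submodule.map_span] at hmap
    refine Submodule.span_le.2 ?_ hmap
    rintro _ ⟨_, ⟨k, rfl⟩, rfl⟩
    refine Fin.cases ?_ ?_ k
    · exact Submodule.subset_span rfl
    · intro i
      simp only [Matrix.cons_val_succ, hLX i]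
      exact Submodule.zero_mem _
  have hle : Submodule.span ℝ (Set.range fun j => ρ t j) ≤
      Submodule.span ℝ {L (deriv γ t)} := by
    refine Submodule.span_le.2 ?_
    rintro _ ⟨j, rfl⟩
    exact key j
  refine le_trans (Submodule.finrank_mono hle) ?_
  rcases eq_or_ne (L (deriv γ t)) 0 with h0 | h0
  · rw [h0, Submodule.span_zero_singleton]
    simp
  · rw [finrank_span_singleton h0]
end

section
/- Assume additionally that for every j ∈ {1, …, m−1} and every t the family (Ẋ_j(t), γ̇(t), X_1(t), …, X_{m−1}(t)) is linearly dependent (σ is rank-one). Then for every (t, u^1, …, u^{m−2}) ∈ ℝ × ℝ^{m−2}, the vectors (∂β/∂t)(t, u^1, …, u^{m−2}), X_1(t), …, X_{m−1}(t) are linearly dependent; that is, every point of the striction hypersurface β is a singular point of the ruled submanifold σ. -/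
open scoped RealInnerProductSpace

/-- If `σ` has degree one and is rank-one (for every `j` and `t` the family
`(Ẋⱼ(t), γ̇(t), X₁(t), …, X_{m-1}(t))` is linearly dependent), then for every `(t,u)` the
vectors `∂β/∂t, X₁(t), …, X_{m-1}(t)` are linearly dependent: every point of the striction
hypersurface `β` is a singular point of `σ`. -/
theorem stmt_11 (m n : ℕ) (hm : 2 ≤ m) (hn : 1 ≤ n)
    (γ : ℝ → EuclideanSpace ℝ (Fin (m + n)))
    (X : Fin (m - 1) → ℝ → EuclideanSpace ℝ (Fin (m + n)))
    (hγ : ContDiff ℝ (⊤ : ℕ∞) γ) (hγ' : ∀ t, ‖deriv γ t‖ = 1)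
    (hX : ∀ j, ContDiff ℝ (⊤ : ℕ∞) (X j))
    (hON : ∀ t, Orthonormal ℝ (fun j => X j t))
    (D : ℝ → Submodule ℝ (EuclideanSpace ℝ (Fin (m + n))))
    (hD : ∀ t, D t = Submodule.span ℝ (Set.range fun j => X j t))
    (ρ : ℝ → Fin (m - 1) → EuclideanSpace ℝ (Fin (m + n)))
    (hρ : ∀ t j, ρ t j = ↑((D t)ᗮ.orthogonalProjectionOnto (deriv (X j) t)))
    -- index maps: `jdx` enumerates `{1, …, m-2}`, `last` is the index of `X_{m-1}`
    (jdx : Fin (m - 2) → Fin (m - 1)) (hjdx : ∀ j, (jdx j : ℕ) = (j : ℕ))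
    (last : Fin (m - 1)) (hlast : (last : ℕ) = m - 2)
    -- `σ` has degree one
    (hdeg : ∀ t, Module.finrank ℝ (Submodule.span ℝ (Set.range fun j => ρ t j)) = 1)
    (hne : ∀ t, ρ t last ≠ 0)
    -- the striction hypersurface `β`, built from a smooth function `s^{m-1}`
    (s : ℝ × (Fin (m - 2) → ℝ) → ℝ) (hs : ContDiff ℝ (⊤ : ℕ∞) s)
    (β : ℝ → (Fin (m - 2) → ℝ) → EuclideanSpace ℝ (Fin (m + n)))
    (hβ : ∀ t u, β t u = γ t + (∑ j, u j • X (jdx j) t) + s (t, u) • X last t)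
    (hstr : ∀ (t : ℝ) (u : Fin (m - 2) → ℝ),
      ⟪deriv (fun τ => β τ u) t, ρ t last⟫ = 0)
    -- `σ` is rank-one
    (hrank1 : ∀ (j : Fin (m - 1)) (t : ℝ),
      ¬ LinearIndependent ℝ
        (Matrix.vecCons (deriv (X j) t) (Matrix.vecCons (deriv γ t) (fun i => X i t)))) :
    ∀ (t : ℝ) (u : Fin (m - 2) → ℝ),
      ¬ LinearIndependent ℝ
        (Matrix.vecCons (deriv (fun τ => β τ u) t) (fun i => X i t)) := by
  intro t u
  classical
  set K := (D t)ᗮ with hKdef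
  set P : EuclideanSpace ℝ (Fin (m + n)) →L[ℝ] EuclideanSpace ℝ (Fin (m + n)) :=
    K.subtypeL.comp (K.orthogonalProjectionOnto) with hPdef
  have hPX : ∀ j, P (X j t) = 0 := by
    intro j
    have hx : X j t ∈ Kᗮ := by
      rw [hKdef, Submodule.orthogonal_orthogonal, hD]
      exact Submodule.subset_span ⟨j, rfl⟩
    simp [hPdef, Submodule.orthogonalProjectionOnto_apply_of_mem_orthogonal hx]
  have hPd : ∀ j, P (deriv (X j) t) = ρ t j := by
    intro j; rw [hρ]; rfl
  -- all ρ's lie in the span of ρ t last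
  have hspan : Submodule.span ℝ (Set.range fun j => ρ t j) = Submodule.span ℝ {ρ t last} := by
    refine (Submodule.eq_of_le_of_finrank_le ?_ ?_).symm
    · exact Submodule.span_mono (by rintro x rfl; exact ⟨last, rfl⟩)
    · rw [hdeg t, finrank_span_singleton (hne t)]
  have hρmem : ∀ j, ρ t j ∈ Submodule.span ℝ {ρ t last} := by
    intro j; rw [← hspan]; exact Submodule.subset_span ⟨j, rfl⟩
  -- rank-one ⇒ the projection of deriv γ t lies in span {ρ t last}
  have hPγ : P (deriv γ t) ∈ Submodule.span ℝ {ρ t last} := by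
    obtain ⟨g, hg, i0, hi0⟩ := Fintype.not_linearIndependent_iff.1 (hrank1 last t)
    rw [Fin.sum_univ_succ, Fin.sum_univ_succ] at hg
    simp only [Matrix.cons_val_zero, Matrix.cons_val_succ] at hg
    by_cases h1 : g ((0 : Fin (m - 1 + 1)).succ) = 0
    · exfalso
      by_cases h0 : g 0 = 0
      · rw [h0, h1, zero_smul, zero_smul, zero_add, zero_add] at hg
        have hz := Fintype.linearIndependent_iff.1 (hON t).linearIndependent
          (fun i => g i.succ.succ) hg
        refine hi0 ?_
        refine Fin.cases h0 (fun i1 => ?_) i0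
        exact Fin.cases h1 (fun i2 => hz i2) i1
      · have := congrArg P hg
        simp only [map_add, map_smul, map_sum, hPX, hPd, smul_zero, map_zero,
          Finset.sum_const_zero, add_zero, h1, zero_smul] at this
        exact hne t (by simpa [smul_eq_zero, h0] using this)
    · have := congrArg P hg
      simp only [map_add, map_smul, map_sum, hPX, hPd, smul_zero, map_zero,
        Finset.sum_const_zero, add_zero] at this
      -- this : g 0 • ρ t last + g 1 • P (deriv γ t) = 0
      have h2 : g ((0 : Fin (m - 1 + 1)).succ) • P (deriv γ t)
          = -(g 0 • ρ t last) := by linear_combination (norm := module) this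
      have : P (deriv γ t) = (g ((0 : Fin (m - 1 + 1)).succ))⁻¹ • -(g 0 • ρ t last) := by
        rw [← h2, smul_smul, inv_mul_cancel₀ h1, one_smul]
      rw [this]
      exact Submodule.smul_mem _ _ (Submodule.neg_mem _
        (Submodule.smul_mem _ _ (Submodule.mem_span_singleton_self _)))
  -- differentiability facts
  have hγd : HasDerivAt γ (deriv γ t) t := (hγ.differentiable (by simp) t).hasDerivAt
  have hXd : ∀ j, HasDerivAt (X j) (deriv (X j) t) t :=
    fun j => ((hX j).differentiable (by simp) t).hasDerivAt
  have hsu : HasDerivAt (fun τ => s (τ, u)) (deriv (fun τ => s (τ, u)) t) t := by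
    have h1 : DifferentiableAt ℝ s (t, u) := (hs.differentiable (by simp)).differentiableAt
    have h2 : DifferentiableAt ℝ (fun τ : ℝ => (τ, u)) t :=
      differentiableAt_id.prodMk (differentiableAt_const u)
    exact (h1.comp t h2).hasDerivAt
  set B := deriv γ t + (∑ j, u j • deriv (X (jdx j)) t) +
      (s (t, u) • deriv (X last) t + deriv (fun τ => s (τ, u)) t • X last t) with hBdef
  have hderiv : HasDerivAt (fun τ => β τ u) B t := by
    have he : (fun τ => β τ u)
        = fun τ => γ τ + (∑ j, u j • X (jdx j) τ) + s (τ, u) • X last τ := by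
      funext τ; exact hβ τ u
    rw [he, hBdef]
    exact (hγd.add (HasDerivAt.fun_sum fun j _ => (hXd (jdx j)).const_smul (u j))).add
      (hsu.smul (hXd last))
  have hBd : deriv (fun τ => β τ u) t = B := hderiv.deriv
  -- the projection of B lies in span {ρ t last}
  have hPB : P B ∈ Submodule.span ℝ {ρ t last} := by
    rw [hBdef]
    simp only [map_add, map_smul, map_sum]
    refine Submodule.add_mem _ (Submodule.add_mem _ hPγ ?_) (Submodule.add_mem _ ?_ ?_)
    · exact Submodule.sum_mem _ fun j _ => by
        rw [hPd]; exact Submodule.smul_mem _ _ (hρmem (jdx j))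
    · rw [hPd]; exact Submodule.smul_mem _ _ (Submodule.mem_span_singleton_self _)
    · rw [hPX]; simp
  obtain ⟨c, hc⟩ := Submodule.mem_span_singleton.1 hPB
  -- striction ⇒ the projection vanishes
  have hρK : ρ t last ∈ K := by rw [hρ]; exact (K.orthogonalProjectionOnto (deriv (X last) t)).2
  have hin : ⟪B, ρ t last⟫ = 0 := by rw [← hBd]; exact hstr t u
  have hsub : ⟪B - P B, ρ t last⟫ = 0 :=
    K.starProjection_inner_eq_zero B (ρ t last) hρK
  rw [inner_sub_left] at hsub
  have hPBin : ⟪P B, ρ t last⟫ = 0 := by rw [hin] at hsub; linarith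
  rw [← hc, real_inner_smul_left] at hPBin
  have hc0 : c = 0 := by
    rcases mul_eq_zero.1 hPBin with h | h
    · exact h
    · exact absurd ((inner_self_eq_zero (𝕜 := ℝ)).1 h) (hne t)
  have hPB0 : P B = 0 := by rw [← hc, hc0, zero_smul]
  have hBK : B ∈ Kᗮ := by
    have : K.orthogonalProjectionOnto B = 0 := by
      have := hPB0
      simp only [hPdef, ContinuousLinearMap.comp_apply, Submodule.subtypeL_apply] at this
      exact_mod_cast this
    exact Submodule.orthogonalProjectionOnto_eq_zero_iff.1 this
  have hBD : B ∈ Submodule.span ℝ (Set.range fun i => X i t) := by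
    rw [← hD]
    rw [hKdef, Submodule.orthogonal_orthogonal] at hBK
    exact hBK
  -- conclude
  rw [hBd]
  intro hLI
  rw [show (Matrix.vecCons B fun i => X i t) = Fin.cons B (fun i => X i t) from rfl,
    linearIndependent_fin_cons] at hLI
  exact hLI.2 hBD
end

section
/- Assume there exists (u^1, …, u^{m−2}) ∈ ℝ^{m−2} such that for every t the vectors (∂β/∂t)(t, u^1, …, u^{m−2}), X_1(t), …, X_{m−1}(t) are linearly dependent (σ is singular along the striction hypersurface). Then for every j ∈ {1, …, m−1} and every t the family (Ẋ_j(t), γ̇(t), X_1(t), …, X_{m−1}(t)) is linearly dependent; that is, σ is rank-one. -/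
open scoped RealInnerProductSpace

/-- If `σ` has degree one and there exists `u ∈ ℝ^{m-2}` such that for every
`t` the vectors `∂β/∂t, X₁(t), …, X_{m-1}(t)` are linearly dependent (`σ` is singular along
the striction hypersurface), then for every `j` and `t` the family
`(Ẋⱼ(t), γ̇(t), X₁(t), …, X_{m-1}(t))` is linearly dependent: `σ` is rank-one. -/
theorem stmt_12 (m n : ℕ) (hm : 2 ≤ m) (hn : 1 ≤ n)
    (γ : ℝ → EuclideanSpace ℝ (Fin (m + n)))
    (X : Fin (m - 1) → ℝ → EuclideanSpace ℝ (Fin (m + n)))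
    (hγ : ContDiff ℝ (⊤ : ℕ∞) γ) (hγ' : ∀ t, ‖deriv γ t‖ = 1)
    (hX : ∀ j, ContDiff ℝ (⊤ : ℕ∞) (X j))
    (hON : ∀ t, Orthonormal ℝ (fun j => X j t))
    (D : ℝ → Submodule ℝ (EuclideanSpace ℝ (Fin (m + n))))
    (hD : ∀ t, D t = Submodule.span ℝ (Set.range fun j => X j t))
    (ρ : ℝ → Fin (m - 1) → EuclideanSpace ℝ (Fin (m + n)))
    (hρ : ∀ t j, ρ t j = ↑(Submodule.orthogonalProjectionOnto (D t)ᗮ (deriv (X j) t)))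
    -- index maps: `jdx` enumerates `{1, …, m-2}`, `last` is the index of `X_{m-1}`
    (jdx : Fin (m - 2) → Fin (m - 1)) (hjdx : ∀ j, (jdx j : ℕ) = (j : ℕ))
    (last : Fin (m - 1)) (hlast : (last : ℕ) = m - 2)
    -- `σ` has degree one
    (hdeg : ∀ t, Module.finrank ℝ (Submodule.span ℝ (Set.range fun j => ρ t j)) = 1)
    (hne : ∀ t, ρ t last ≠ 0)
    -- the striction hypersurface `β`, built from a smooth function `s^{m-1}`
    (s : ℝ × (Fin (m - 2) → ℝ) → ℝ) (hs : ContDiff ℝ (⊤ : ℕ∞) s)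
    (β : ℝ → (Fin (m - 2) → ℝ) → EuclideanSpace ℝ (Fin (m + n)))
    (hβ : ∀ t u, β t u = γ t + (∑ j, u j • X (jdx j) t) + s (t, u) • X last t)
    (hstr : ∀ (t : ℝ) (u : Fin (m - 2) → ℝ),
      ⟪deriv (fun τ => β τ u) t, ρ t last⟫ = 0)
    -- `σ` is singular along the striction hypersurface
    (hsing : ∃ u : Fin (m - 2) → ℝ, ∀ t : ℝ,
      ¬ LinearIndependent ℝ
        (Matrix.vecCons (deriv (fun τ => β τ u) t) (fun i => X i t))) :
    ∀ (j : Fin (m - 1)) (t : ℝ),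
      ¬ LinearIndependent ℝ
        (Matrix.vecCons (deriv (X j) t) (Matrix.vecCons (deriv γ t) (fun i => X i t))) := by
  classical
  intro j t
  set W : Submodule ℝ (EuclideanSpace ℝ (Fin (m + n))) :=
    Submodule.span ℝ (Set.range fun i => X i t) ⊔ Submodule.span ℝ {ρ t last} with hW
  -- Step A: every ρ t i lies in the span of ρ t last
  have hspanρ : Submodule.span ℝ {ρ t last} = Submodule.span ℝ (Set.range fun i => ρ t i) := by
    apply Submodule.eq_of_le_of_finrank_le
    · exact Submodule.span_mono (by
        intro x hx
        rcases hx with rfl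
        exact ⟨last, rfl⟩)
    · rw [hdeg t, finrank_span_singleton (hne t)]
  have hρmem : ∀ i, ρ t i ∈ Submodule.span ℝ {ρ t last} := by
    intro i; rw [hspanρ]; exact Submodule.subset_span ⟨i, rfl⟩
  -- Step B: derivatives of the X's lie in W
  have hXmem : ∀ i, X i t ∈ W := fun i =>
    Submodule.mem_sup_left (Submodule.subset_span ⟨i, rfl⟩)
  have hdXmem : ∀ i, deriv (X i) t ∈ W := by
    intro i
    have h1 : deriv (X i) t - ρ t i ∈ D t := by
      rw [hρ t i]
      have h := Submodule.sub_starProjection_mem_orthogonal (K := (D t)ᗮ) (deriv (X i) t)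
      rwa [Submodule.orthogonal_orthogonal] at h
    have h2 : deriv (X i) t = (deriv (X i) t - ρ t i) + ρ t i := by abel
    rw [h2]
    exact W.add_mem (Submodule.mem_sup_left (by rwa [hD t] at h1))
      (Submodule.mem_sup_right (hρmem i))
  -- Step C: deriv γ t ∈ W, using the singularity hypothesis
  obtain ⟨u, hu⟩ := hsing
  have hLI_X : LinearIndependent ℝ (fun i => X i t) := (hON t).linearIndependent
  have hb : deriv (fun τ => β τ u) t ∈ Submodule.span ℝ (Set.range fun i => X i t) := by
    by_contra hmem
    exact hu t (linearIndependent_fin_cons.2 ⟨hLI_X, hmem⟩)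
  have hγd : HasDerivAt γ (deriv γ t) t :=
    ((hγ.differentiable (by simp)) t).hasDerivAt
  have hXd : ∀ i, HasDerivAt (X i) (deriv (X i) t) t := fun i =>
    (((hX i).differentiable (by simp)) t).hasDerivAt
  have hsd : HasDerivAt (fun τ : ℝ => s (τ, u)) (deriv (fun τ : ℝ => s (τ, u)) t) t := by
    have hc : ContDiff ℝ (⊤ : ℕ∞) (fun τ : ℝ => s (τ, u)) :=
      hs.comp (contDiff_id.prodMk contDiff_const)
    exact ((hc.differentiable (by simp)) t).hasDerivAt
  have h2 : HasDerivAt (fun τ => ∑ k, u k • X (jdx k) τ)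
      (∑ k, u k • deriv (X (jdx k)) t) t :=
    HasDerivAt.fun_sum fun k _ => (hXd (jdx k)).const_smul (u k)
  have h3 : HasDerivAt (fun τ : ℝ => s (τ, u) • X last τ)
      (s (t, u) • deriv (X last) t + deriv (fun τ : ℝ => s (τ, u)) t • X last t) t :=
    hsd.smul (hXd last)
  have hfun : (fun τ => β τ u)
      = fun τ => γ τ + (∑ k, u k • X (jdx k) τ) + s (τ, u) • X last τ := by
    funext τ; exact hβ τ u
  have hderβ : HasDerivAt (fun τ => β τ u)
      (deriv γ t + (∑ k, u k • deriv (X (jdx k)) t)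
        + (s (t, u) • deriv (X last) t + deriv (fun τ : ℝ => s (τ, u)) t • X last t)) t := by
    rw [hfun]
    exact (hγd.add h2).add h3
  have hbeq := hderβ.deriv
  have hγmem : deriv γ t ∈ W := by
    have hbW : deriv (fun τ => β τ u) t ∈ W := Submodule.mem_sup_left hb
    have heq : deriv γ t = deriv (fun τ => β τ u) t - (∑ k, u k • deriv (X (jdx k)) t)
        - (s (t, u) • deriv (X last) t + deriv (fun τ : ℝ => s (τ, u)) t • X last t) := by
      rw [hbeq]; abel
    rw [heq]
    exact W.sub_mem
      (W.sub_mem hbW (Submodule.sum_mem _ fun k _ => W.smul_mem _ (hdXmem _)))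
      (W.add_mem (W.smul_mem _ (hdXmem _)) (W.smul_mem _ (hXmem _)))
  -- Step D: m+1 vectors in an m-dimensional subspace are dependent
  intro hLI
  have hmem : ∀ i, Matrix.vecCons (deriv (X j) t)
      (Matrix.vecCons (deriv γ t) (fun i => X i t)) i ∈ W := by
    intro i
    refine Fin.cases ?_ (fun i' => ?_) i
    · simpa using hdXmem j
    · refine Fin.cases ?_ (fun i'' => ?_) i'
      · simpa using hγmem
      · simpa using hXmem i''
  let f : Fin (m - 1 + 1 + 1) → W := fun i =>
    ⟨Matrix.vecCons (deriv (X j) t)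
      (Matrix.vecCons (deriv γ t) (fun i => X i t)) i, hmem i⟩
  have hLIf : LinearIndependent ℝ f := by
    apply LinearIndependent.of_comp W.subtype
    exact hLI
  have hcard := hLIf.fintype_card_le_finrank
  have hr1 : Module.finrank ℝ W ≤ (m - 1) + 1 := by
    refine (Submodule.finrank_add_le_finrank_add_finrank _ _).trans ?_
    have e1 : Module.finrank ℝ (Submodule.span ℝ (Set.range fun i => X i t)) = m - 1 := by
      rw [finrank_span_eq_card hLI_X, Fintype.card_fin]
    have e2 : Module.finrank ℝ (Submodule.span ℝ ({ρ t last} : Set _)) = 1 :=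
      finrank_span_singleton (hne t)
    rw [e1, e2]
  rw [Fintype.card_fin] at hcard
  omega
end

section
/- Fix (t, u) ∈ ℝ × ℝ^{m−2}. Suppose that the vectors (∂β/∂t)(t, u), X_1(t), …, X_{m−1}(t) are linearly dependent, and that the m−1 partial derivatives of β at (t, u) (namely ∂β/∂t and ∂β/∂u^j for j = 1, …, m−2) are linearly independent. Then X_{m−1}(t) belongs to the span of the partial derivatives of β at (t, u). (Hence, when its striction hypersurface is regular, a noncylindrical rank-one submanifold is a tangent submanifold of its striction hypersurface.) -/
open scoped RealInnerProductSpace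

/-- Fix `(t,u) ∈ ℝ × ℝ^{m-2}`. If the vectors
`∂β/∂t, X₁(t), …, X_{m-1}(t)` are linearly dependent while the `m-1` partial derivatives of
`β` at `(t,u)` are linearly independent, then `X_{m-1}(t)` lies in the span of the partial
derivatives of `β` at `(t,u)`. (Hence, when its striction hypersurface is regular, a
noncylindrical rank-one submanifold is a tangent submanifold of it.) -/
theorem stmt_14 (m n : ℕ) (hm : 2 ≤ m) (hn : 1 ≤ n)
    (γ : ℝ → EuclideanSpace ℝ (Fin (m + n)))
    (X : Fin (m - 1) → ℝ → EuclideanSpace ℝ (Fin (m + n)))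
    (hγ : ContDiff ℝ (⊤ : ℕ∞) γ) (hγ' : ∀ t, ‖deriv γ t‖ = 1)
    (hX : ∀ j, ContDiff ℝ (⊤ : ℕ∞) (X j))
    (hON : ∀ t, Orthonormal ℝ (fun j => X j t))
    -- index maps: `jdx` enumerates `{1, …, m-2}`, `last` is the index of `X_{m-1}`
    (jdx : Fin (m - 2) → Fin (m - 1)) (hjdx : ∀ j, (jdx j : ℕ) = (j : ℕ))
    (last : Fin (m - 1)) (hlast : (last : ℕ) = m - 2)
    -- the striction hypersurface `β`, built from a smooth function `s^{m-1}`
    (s : ℝ × (Fin (m - 2) → ℝ) → ℝ) (hs : ContDiff ℝ (⊤ : ℕ∞) s)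
    (β : ℝ → (Fin (m - 2) → ℝ) → EuclideanSpace ℝ (Fin (m + n)))
    (hβ : ∀ t u, β t u = γ t + (∑ j, u j • X (jdx j) t) + s (t, u) • X last t)
    (t : ℝ) (u : Fin (m - 2) → ℝ)
    -- the `m-1` partial derivatives of `β` at `(t, u)`
    (B : Fin (m - 2 + 1) → EuclideanSpace ℝ (Fin (m + n)))
    (hB : B = Matrix.vecCons (deriv (fun τ => β τ u) t)
      (fun j => deriv (fun r : ℝ => β t (u + r • (Pi.single j 1 : Fin (m - 2) → ℝ))) 0))
    (hdep : ¬ LinearIndependent ℝ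
      (Matrix.vecCons (deriv (fun τ => β τ u) t) (fun i => X i t)))
    (hreg : LinearIndependent ℝ B) :
    X last t ∈ Submodule.span ℝ (Set.range B) := by
  classical
  set V : Submodule ℝ (EuclideanSpace ℝ (Fin (m + n))) :=
    Submodule.span ℝ (Set.range (fun i => X i t)) with hV
  have hXind : LinearIndependent ℝ (fun i => X i t) := (hON t).linearIndependent
  -- B 0 ∈ V
  have hB0 : deriv (fun τ => β τ u) t ∈ V := by
    by_contra h
    exact hdep ((linearIndependent_fin_cons.2 ⟨hXind, h⟩ : _))
  -- each B (j+1) ∈ V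
  have hBj : ∀ j : Fin (m - 2),
      deriv (fun r : ℝ => β t (u + r • (Pi.single j 1 : Fin (m - 2) → ℝ))) 0 ∈ V := by
    intro j
    set e : Fin (m - 2) → ℝ := (Pi.single j 1 : Fin (m - 2) → ℝ) with he
    set g : ℝ → ℝ := fun r => s (t, u + r • e) with hg
    have hgd : DifferentiableAt ℝ g 0 := by
      apply ((hs.differentiable (by simp)).differentiableAt).comp
      exact (differentiableAt_const t).prodMk
        ((differentiableAt_id.smul_const e).const_add u)
    have hD : HasDerivAt (fun r : ℝ => β t (u + r • e))
        ((∑ i, e i • X (jdx i) t) + deriv g 0 • X last t) 0 := by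
      have h1 : HasDerivAt (fun r : ℝ => γ t + (∑ i, (u i + r * e i) • X (jdx i) t)
          + g r • X last t)
          (0 + (∑ i, e i • X (jdx i) t) + deriv g 0 • X last t) 0 := by
        refine HasDerivAt.add (HasDerivAt.add (hasDerivAt_const 0 (γ t)) ?_) ?_
        · refine HasDerivAt.fun_sum fun i _ => ?_
          simpa using
            ((hasDerivAt_const (0:ℝ) (u i)).add (hasDerivAt_mul_const (e i))).smul_const
              (X (jdx i) t)
        · exact (hgd.hasDerivAt).smul_const (X last t)
      have h2 : (fun r : ℝ => γ t + (∑ i, (u i + r * e i) • X (jdx i) t) + g r • X last t)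
          = fun r : ℝ => β t (u + r • e) := by
        funext r
        rw [hβ]
        simp [hg, Pi.add_apply, Pi.smul_apply, smul_eq_mul]
      rw [← h2]
      simpa using h1
    rw [hD.deriv]
    exact add_mem (Submodule.sum_mem _ fun i _ =>
        Submodule.smul_mem _ _ (Submodule.subset_span ⟨jdx i, rfl⟩))
      (Submodule.smul_mem _ _ (Submodule.subset_span ⟨last, rfl⟩))
  -- span B ≤ V
  have hle : Submodule.span ℝ (Set.range B) ≤ V := by
    rw [Submodule.span_le]
    rintro _ ⟨k, rfl⟩
    rw [hB]
    refine Fin.cases ?_ ?_ k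
    · exact hB0
    · intro j; exact hBj j
  -- equality by dimension count
  have hcard : m - 2 + 1 = m - 1 := by omega
  have hfB : Module.finrank ℝ (Submodule.span ℝ (Set.range B)) = m - 1 := by
    rw [finrank_span_eq_card hreg]
    simp [hcard]
  have hfV : Module.finrank ℝ V = m - 1 := by
    rw [hV, finrank_span_eq_card hXind]
    simp
  have : Submodule.span ℝ (Set.range B) = V :=
    Submodule.eq_of_le_of_finrank_le hle (by rw [hfB, hfV])
  rw [this]
  exact Submodule.subset_span ⟨last, rfl⟩
end

section
/- Fix (t, u) ∈ ℝ × ℝ^{m−2}. If the m−1 partial derivatives of β at (t, u) (namely ∂β/∂t and ∂β/∂u^j for j = 1, …, m−2) are linearly dependent, then X_{m−1}(t) does not belong to their span, and the span of the partial derivatives of β at (t, u) has dimension exactly m − 2. (Hence, when its striction hypersurface is singular everywhere, a noncylindrical rank-one submanifold is a conical submanifold with vertex set the striction hypersurface.) -/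
open scoped RealInnerProductSpace

/-- Fix `(t,u) ∈ ℝ × ℝ^{m-2}`. If the `m-1` partial derivatives of `β` at
`(t,u)` are linearly dependent, then `X_{m-1}(t)` does not belong to their span, and the span
of the partial derivatives of `β` at `(t,u)` has dimension exactly `m-2`. (Hence, when its
striction hypersurface is singular everywhere, a noncylindrical rank-one submanifold is a
conical submanifold with vertex set the striction hypersurface.) -/
theorem stmt_15 (m n : ℕ) (hm : 2 ≤ m) (hn : 1 ≤ n)
    (γ : ℝ → EuclideanSpace ℝ (Fin (m + n)))
    (X : Fin (m - 1) → ℝ → EuclideanSpace ℝ (Fin (m + n)))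
    (hγ : ContDiff ℝ (⊤ : ℕ∞) γ) (hγ' : ∀ t, ‖deriv γ t‖ = 1)
    (hX : ∀ j, ContDiff ℝ (⊤ : ℕ∞) (X j))
    (hON : ∀ t, Orthonormal ℝ (fun j => X j t))
    -- index maps: `jdx` enumerates `{1, …, m-2}`, `last` is the index of `X_{m-1}`
    (jdx : Fin (m - 2) → Fin (m - 1)) (hjdx : ∀ j, (jdx j : ℕ) = (j : ℕ))
    (last : Fin (m - 1)) (hlast : (last : ℕ) = m - 2)
    -- the striction hypersurface `β`, built from a smooth function `s^{m-1}`
    (s : ℝ × (Fin (m - 2) → ℝ) → ℝ) (hs : ContDiff ℝ (⊤ : ℕ∞) s)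
    (β : ℝ → (Fin (m - 2) → ℝ) → EuclideanSpace ℝ (Fin (m + n)))
    (hβ : ∀ t u, β t u = γ t + (∑ j, u j • X (jdx j) t) + s (t, u) • X last t)
    (t : ℝ) (u : Fin (m - 2) → ℝ)
    -- the `m-1` partial derivatives of `β` at `(t, u)`
    (B : Fin (m - 2 + 1) → EuclideanSpace ℝ (Fin (m + n)))
    (hB : B = Matrix.vecCons (deriv (fun τ => β τ u) t)
      (fun j => deriv (fun r : ℝ => β t (u + r • (Pi.single j 1 : Fin (m - 2) → ℝ))) 0))
    (hdep : ¬ LinearIndependent ℝ B) :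
    X last t ∉ Submodule.span ℝ (Set.range B) ∧
    Module.finrank ℝ (Submodule.span ℝ (Set.range B)) = m - 2 := by
  classical
  -- inner products of the orthonormal frame
  have hIP : ∀ a b : Fin (m - 1), ⟪X a t, X b t⟫ = if a = b then (1:ℝ) else 0 := by
    have h := orthonormal_iff_ite.mp (hON t)
    exact fun a b => h a b
  have hjdx_inj : Function.Injective jdx := by
    intro a b h
    have : (a : ℕ) = (b : ℕ) := by rw [← hjdx a, ← hjdx b, h]
    exact Fin.ext this
  have hjdx_ne_last : ∀ j : Fin (m - 2), jdx j ≠ last := by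
    intro j h
    have h1 := hjdx j
    have h2 := hlast
    have h3 : (jdx j : ℕ) = (last : ℕ) := by rw [h]
    have := j.isLt
    omega
  -- the derivative coefficients
  set c : Fin (m - 2) → ℝ :=
    fun j => deriv (fun r : ℝ => s (t, u + r • (Pi.single j 1 : Fin (m - 2) → ℝ))) 0 with hc
  set T : Fin (m - 2) → EuclideanSpace ℝ (Fin (m + n)) :=
    fun j => X (jdx j) t + c j • X last t with hT
  -- compute the tail partial derivatives
  have key : ∀ j : Fin (m - 2),
      HasDerivAt (fun r : ℝ => β t (u + r • (Pi.single j 1 : Fin (m - 2) → ℝ))) (T j) 0 := by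
    intro j
    have hg : Differentiable ℝ (fun r : ℝ =>
        ((t, u + r • (Pi.single j 1 : Fin (m - 2) → ℝ)) : ℝ × (Fin (m - 2) → ℝ))) :=
      Differentiable.prodMk (differentiable_const _) ((differentiable_const _).add (differentiable_id.smul_const _))
    have hsg : DifferentiableAt ℝ
        (fun r : ℝ => s (t, u + r • (Pi.single j 1 : Fin (m - 2) → ℝ))) 0 :=
      ((hs.differentiable (by simp)).comp hg) 0
    have h3 : HasDerivAt
        (fun r : ℝ => s (t, u + r • (Pi.single j 1 : Fin (m - 2) → ℝ)) • X last t)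
        (c j • X last t) 0 := hsg.hasDerivAt.smul_const _
    have h2 : HasDerivAt
        (fun r : ℝ => ∑ k, (u k + r * (Pi.single j 1 : Fin (m - 2) → ℝ) k) • X (jdx k) t)
        (X (jdx j) t) 0 := by
      have hsum := HasDerivAt.sum (u := Finset.univ) (x := (0:ℝ)) fun k _ =>
        ((((hasDerivAt_id (0:ℝ)).mul_const ((Pi.single j 1 : Fin (m - 2) → ℝ) k)).const_add
          (u k)).smul_const (X (jdx k) t))
      convert hsum using 1
      · rfl
      · rfl
      · rfl
      · funext r
        simp [Finset.sum_apply]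
      have hstep : ∀ k : Fin (m - 2), ((1:ℝ) * (Pi.single j 1 : Fin (m - 2) → ℝ) k) • X (jdx k) t
          = if k = j then X (jdx j) t else 0 := by
        intro k
        by_cases h : k = j
        · subst h; simp
        · simp [Pi.single_eq_of_ne h, h]
      rw [Finset.sum_congr rfl fun k _ => hstep k, Finset.sum_ite_eq' Finset.univ j]
      simp
    have heq : (fun r : ℝ => β t (u + r • (Pi.single j 1 : Fin (m - 2) → ℝ)))
        = fun r : ℝ => γ t + (∑ k, (u k + r * (Pi.single j 1 : Fin (m - 2) → ℝ) k) • X (jdx k) t)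
          + s (t, u + r • (Pi.single j 1 : Fin (m - 2) → ℝ)) • X last t := by
      funext r
      rw [hβ]
      simp [Pi.add_apply, Pi.smul_apply, smul_eq_mul]
    rw [heq]
    have := ((hasDerivAt_const (0:ℝ) (γ t)).add h2).add h3
    rw [zero_add] at this
    exact this
  -- the tail of B equals T
  have htail : (fun j : Fin (m - 2) =>
      deriv (fun r : ℝ => β t (u + r • (Pi.single j 1 : Fin (m - 2) → ℝ))) 0) = T :=
    funext fun j => (key j).deriv
  have hBeq : B = Fin.cons (deriv (fun τ => β τ u) t) T := by
    rw [hB, htail]; rfl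
  -- key inner product computation
  have hinner : ∀ k i : Fin (m - 2), ⟪X (jdx k) t, T i⟫ = if k = i then (1:ℝ) else 0 := by
    intro k i
    rw [hT]
    simp only [inner_add_right, inner_smul_right, hIP]
    rw [if_neg (hjdx_ne_last k)]
    by_cases h : k = i
    · subst h; simp
    · have hne : jdx k ≠ jdx i := fun he => h (hjdx_inj he)
      simp [hne, h]
  -- T is linearly independent
  have hTind : LinearIndependent ℝ T := by
    rw [Fintype.linearIndependent_iff]
    intro g hg k
    have h1 : ⟪X (jdx k) t, ∑ i, g i • T i⟫ = g k := by
      rw [inner_sum]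
      simp only [inner_smul_right, hinner]
      simp
    rw [hg, inner_zero_right] at h1
    exact h1.symm
  -- decompose the dependence
  have hD0 : deriv (fun τ => β τ u) t ∈ Submodule.span ℝ (Set.range T) := by
    by_contra hD0
    exact hdep (by rw [hBeq]; exact linearIndependent_fin_cons.mpr ⟨hTind, hD0⟩)
  have hspan : Submodule.span ℝ (Set.range B) = Submodule.span ℝ (Set.range T) := by
    rw [hBeq, Fin.range_cons, Submodule.span_insert_eq_span hD0]
  constructor
  · rw [hspan]
    intro hmem
    rw [Submodule.mem_span_range_iff_exists_fun ℝ] at hmem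
    obtain ⟨g, hg⟩ := hmem
    have hzero : ∀ k, g k = 0 := by
      intro k
      have h1 : ⟪X (jdx k) t, ∑ i, g i • T i⟫ = g k := by
        rw [inner_sum]
        simp only [inner_smul_right, hinner]
        simp
      rw [hg, hIP, if_neg (hjdx_ne_last k)] at h1
      exact h1.symm
    have : X last t = 0 := by
      rw [← hg]
      simp [hzero]
    have h2 := hIP last last
    rw [this, if_pos rfl, inner_zero_right] at h2
    exact one_ne_zero h2.symm
  · rw [hspan, finrank_span_eq_card hTind]
    simp
end
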